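/- arXiv:0908.0423 — 5 statements merged into one kernel-verified Lean document; each statement's English description precedes it below -/
import Mathlib

section
/- Let φ : M → N be a smooth map between Riemannian manifolds and Φ = φ_* : TM → TN its differential. For X, ξ ∈ T_xM, the second differential satisfies Φ_*(X^v_ξ) = (φ_*X)^v_{φ_*ξ} and Φ_*(X^h_ξ) = (φ_*X)^h_{φ_*ξ} + (B(X,ξ))^v_{φ_*ξ}, where B is the second fundamental form of φ and (·)^h, (·)^v denote horizontal and vertical lifts determined by the Levi-Civita connections. -/
open Function
open scoped BigOperators

noncomputable section

/-- A Riemannian metric on a vector space regarded as a global chart of a manifold: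
a symmetric, positive definite, smoothly point-dependent bilinear form. -/
def IsMetric {P : Type*} [NormedAddCommGroup P] [NormedSpace ℝ P]
    (g : P → P → P → ℝ) : Prop :=
  (∀ x u v, g x u v = g x v u) ∧
  (∀ x u, u ≠ 0 → 0 < g x u u) ∧
  (∀ x v, IsLinearMap ℝ (fun u => g x u v)) ∧
  (∀ u v, ContDiff ℝ (⊤ : ℕ∞) fun x => g x u v)

/-- Christoffel symbols: a smoothly point-dependent bilinear map. -/
def IsChristoffel {P : Type*} [NormedAddCommGroup P] [NormedSpace ℝ P]
    (Γ : P → P → P → P) : Prop :=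
  (∀ x v, IsLinearMap ℝ (fun u => Γ x u v)) ∧
  (∀ x u, IsLinearMap ℝ (fun v => Γ x u v)) ∧
  (∀ u v, ContDiff ℝ (⊤ : ℕ∞) fun x => Γ x u v)

/-- `Γ` are the Christoffel symbols of the Levi-Civita connection of the metric `g`:
they are symmetric (torsion-free) and the metric is covariantly constant. -/
def IsLeviCivita {P : Type*} [NormedAddCommGroup P] [NormedSpace ℝ P]
    (g : P → P → P → ℝ) (Γ : P → P → P → P) : Prop :=
  IsChristoffel Γ ∧
  (∀ x u v, Γ x u v = Γ x v u) ∧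
  (∀ x u v w, fderiv ℝ (fun y => g y u v) x w = g x (Γ x w u) v + g x u (Γ x w v))

variable {E : Type*} [NormedAddCommGroup E] [NormedSpace ℝ E]
variable {F : Type*} [NormedAddCommGroup F] [NormedSpace ℝ F]

/-- The second fundamental form `B = ∇ φ_*` of a map `φ`, in global charts:
`B(X,Y) = ∇^φ_X φ_* Y - φ_*(∇^M_X Y)`. -/
def sff (ΓM : E → E → E → E) (ΓN : F → F → F → F) (φ : E → F) (x X Y : E) : F :=
  fderiv ℝ (fun y => fderiv ℝ φ y Y) x X
    + ΓN (φ x) (fderiv ℝ φ x X) (fderiv ℝ φ x Y)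
    - fderiv ℝ φ x (ΓM x X Y)

/-- The differential `Φ = φ_* : TM → TN` in global charts (`TM = E × E`, `TN = F × F`). -/
def tmap (φ : E → F) : E × E → F × F := fun z => (φ z.1, fderiv ℝ φ z.1 z.2)

/-- The horizontal lift `u^h_ξ ∈ T_ξ TM` (at base point `x`), in global charts:
the kernel of the connection map `K(a,b) = b + Γ_x(a, ξ)`. -/
def hlift {P : Type*} [NormedAddCommGroup P] [NormedSpace ℝ P]
    (Γ : P → P → P → P) (x ξ u : P) : P × P := (u, -Γ x u ξ)

/-- The vertical lift `w^v_ξ ∈ T_ξ TM` in global charts. -/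
def vlift {P : Type*} [NormedAddCommGroup P] [NormedSpace ℝ P] (w : P) : P × P := (0, w)

/-- The Cheeger–Gromoll type metric `h_{p,q,α}` at the point `ξ ∈ T_x M`, evaluated on
`A, B ∈ T_ξ TM`, in global charts:  `h(A,B) = g(π_* A, π_* B) + ω_α(ξ)^p (g(KA,KB) + q g(KA,ξ) g(KB,ξ))`
where `ω_α(ξ) = (1 + α g(ξ,ξ))⁻¹` and `K(a,b) = b + Γ_x(a,ξ)` is the connection map. -/
def cg {P : Type*} [NormedAddCommGroup P] [NormedSpace ℝ P]
    (g : P → P → P → ℝ) (Γ : P → P → P → P) (p q α : ℝ) (x ξ : P) (A B : P × P) : ℝ :=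
  g x A.1 B.1 + ((1 + α * g x ξ ξ)⁻¹) ^ p *
    (g x (A.2 + Γ x A.1 ξ) (B.2 + Γ x B.1 ξ)
      + q * g x (A.2 + Γ x A.1 ξ) ξ * g x (B.2 + Γ x B.1 ξ) ξ)

/-- The horizontal space `H^φ_x = (ker φ_{*x})^⊥` of a map `φ` at `x`, w.r.t. the metric `g`. -/
def Hor (g : E → E → E → ℝ) (φ : E → F) (x : E) : Set E :=
  {X | ∀ Z, fderiv ℝ φ x Z = 0 → g x X Z = 0}

/-- `φ` is a horizontally conformal submersion with dilatation `lam`. -/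
def HCSub (g : E → E → E → ℝ) (gN : F → F → F → ℝ) (φ : E → F) (lam : E → ℝ) : Prop :=
  (∀ x, Surjective (fderiv ℝ φ x)) ∧ (∀ x, 0 < lam x) ∧
  ∀ x, ∀ X ∈ Hor g φ x, ∀ Y ∈ Hor g φ x,
    gN (φ x) (fderiv ℝ φ x X) (fderiv ℝ φ x Y) = lam x * g x X Y

/-- The horizontal space of `Φ = φ_* : TM → TN` at `z = (x,ξ)`, i.e. the orthogonal
complement of `ker Φ_*` with respect to the Cheeger–Gromoll type metric `h_{p,q,α}`. -/
def HorT (g : E → E → E → ℝ) (Γ : E → E → E → E) (p q α : ℝ) (φ : E → F) (z : E × E) :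
    Set (E × E) :=
  {A | ∀ A', fderiv ℝ (tmap φ) z A' = 0 → cg g Γ p q α z.1 z.2 A A' = 0}

/-- `Φ = φ_* : (TM, h_{p,q,α}) → (TN, h_{r,s,β})` is a horizontally conformal submersion
with dilatation `Lam`. -/
def HCSubT (g : E → E → E → ℝ) (Γ : E → E → E → E) (p q α : ℝ)
    (gN : F → F → F → ℝ) (ΓN : F → F → F → F) (r s β : ℝ)
    (φ : E → F) (Lam : E × E → ℝ) : Prop :=
  (∀ z, Surjective (fderiv ℝ (tmap φ) z)) ∧ (∀ z, 0 < Lam z) ∧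
  ∀ z : E × E, ∀ A ∈ HorT g Γ p q α φ z, ∀ A' ∈ HorT g Γ p q α φ z,
    cg gN ΓN r s β (φ z.1) (fderiv ℝ φ z.1 z.2)
        (fderiv ℝ (tmap φ) z A) (fderiv ℝ (tmap φ) z A')
      = Lam z * cg g Γ p q α z.1 z.2 A A'

/-- `φ` is horizontally conformal with dilatation `lam` (general form, allowing critical
points: at each point either `φ_{*x} = 0`, or `φ_{*x}` is a surjective conformal map on
the horizontal space with positive factor `lam x`). -/
def HorizConf (g : E → E → E → ℝ) (gN : F → F → F → ℝ) (φ : E → F) (lam : E → ℝ) : Prop :=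
  ∀ x, fderiv ℝ φ x = 0 ∨
    (0 < lam x ∧ Surjective (fderiv ℝ φ x) ∧
      ∀ X ∈ Hor g φ x, ∀ Y ∈ Hor g φ x,
        gN (φ x) (fderiv ℝ φ x X) (fderiv ℝ φ x Y) = lam x * g x X Y)

/-- `Φ = φ_* : (TM, h_{p,q,α}) → (TN, h_{r,s,β})` is horizontally conformal with
dilatation `Lam` (general form, allowing critical points). -/
def HorizConfT (g : E → E → E → ℝ) (Γ : E → E → E → E) (p q α : ℝ)
    (gN : F → F → F → ℝ) (ΓN : F → F → F → F) (r s β : ℝ)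
    (φ : E → F) (Lam : E × E → ℝ) : Prop :=
  ∀ z : E × E, fderiv ℝ (tmap φ) z = 0 ∨
    (0 < Lam z ∧ Surjective (fderiv ℝ (tmap φ) z) ∧
      ∀ A ∈ HorT g Γ p q α φ z, ∀ A' ∈ HorT g Γ p q α φ z,
        cg gN ΓN r s β (φ z.1) (fderiv ℝ φ z.1 z.2)
            (fderiv ℝ (tmap φ) z A) (fderiv ℝ (tmap φ) z A')
          = Lam z * cg g Γ p q α z.1 z.2 A A')

/-- `φ` is a harmonic map: its tension field, the `g`-trace of the second fundamental
form, vanishes (computed in any `g`-orthonormal basis). -/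
def Harmonic (g : E → E → E → ℝ) (ΓM : E → E → E → E) (ΓN : F → F → F → F)
    (φ : E → F) : Prop :=
  ∀ (x : E) (n : ℕ) (e : Fin n → E),
    (∀ i j, g x (e i) (e j) = if i = j then 1 else 0) →
    Submodule.span ℝ (Set.range e) = ⊤ →
    ∑ i, sff ΓM ΓN φ x (e i) (e i) = 0

/-- The tensor `S` measuring the change of the Levi-Civita connection under the conformal
change `g ↦ λ g`:  `S(X,Y) = (1/(2λ))((Xλ)Y + (Yλ)X − g(X,Y) grad λ)`. -/
def Sconf (g : E → E → E → ℝ) (lam : E → ℝ) (gradlam : E → E) (x X Y : E) : E :=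
  (2 * lam x)⁻¹ • ((fderiv ℝ lam x X) • Y + (fderiv ℝ lam x Y) • X - (g x X Y) • gradlam x)


/-- Lemma 1 of the paper. For a smooth map `φ : M → N` between
Riemannian manifolds (in global charts, with Levi-Civita Christoffel symbols `ΓM`, `ΓN`),
the second differential `Φ_* = (φ_*)_*` satisfies
`Φ_*(X^v_ξ) = (φ_* X)^v_{φ_* ξ}` and `Φ_*(X^h_ξ) = (φ_* X)^h_{φ_* ξ} + (B(X,ξ))^v_{φ_* ξ}`. -/
theorem stmt1
    (gM : E → E → E → ℝ) (gN : F → F → F → ℝ)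
    (ΓM : E → E → E → E) (ΓN : F → F → F → F)
    (hgM : IsMetric gM) (hgN : IsMetric gN)
    (hΓM : IsLeviCivita gM ΓM) (hΓN : IsLeviCivita gN ΓN)
    (φ : E → F) (hφ : ContDiff ℝ (⊤ : ℕ∞) φ)
    (x ξ X : E) :
    fderiv ℝ (tmap φ) (x, ξ) (vlift X) = vlift (fderiv ℝ φ x X) ∧
    fderiv ℝ (tmap φ) (x, ξ) (hlift ΓM x ξ X)
      = hlift ΓN (φ x) (fderiv ℝ φ x ξ) (fderiv ℝ φ x X) + vlift (sff ΓM ΓN φ x X ξ) := by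
  have hφ' : Differentiable ℝ φ := hφ.differentiable (by simp)
  have hDφ : ContDiff ℝ (⊤ : ℕ∞) (fderiv ℝ φ) := hφ.fderiv_right (by exact_mod_cast le_top)
  -- derivative of the first component z ↦ φ z.1
  have h1 : HasFDerivAt (fun z : E × E => φ z.1)
      ((fderiv ℝ φ x).comp (ContinuousLinearMap.fst ℝ E E)) (x, ξ) :=
    (hφ'.differentiableAt.hasFDerivAt).comp (x, ξ) (hasFDerivAt_fst)
  -- derivative of z ↦ fderiv φ z.1 (as clm-valued function)
  have hc : HasFDerivAt (fun z : E × E => fderiv ℝ φ z.1)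
      (((fderiv ℝ (fderiv ℝ φ) x)).comp (ContinuousLinearMap.fst ℝ E E)) (x, ξ) :=
    ((hDφ.differentiable (by simp)).differentiableAt.hasFDerivAt).comp (x, ξ) hasFDerivAt_fst
  have hu : HasFDerivAt (fun z : E × E => z.2) (ContinuousLinearMap.snd ℝ E E) (x, ξ) :=
    hasFDerivAt_snd
  have h2 := hc.clm_apply hu
  have hT : HasFDerivAt (tmap φ) (((fderiv ℝ φ x).comp (ContinuousLinearMap.fst ℝ E E)).prod
      ((fderiv ℝ φ ((x, ξ) : E × E).1).comp (ContinuousLinearMap.snd ℝ E E) +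
        (((fderiv ℝ (fderiv ℝ φ) x)).comp (ContinuousLinearMap.fst ℝ E E)).flip ((x, ξ) : E × E).2)) (x, ξ) :=
    HasFDerivAt.prodMk h1 h2
  have hD := hT.fderiv
  -- second derivative rewriting: fderiv (fun y => fderiv φ y ξ) x X = (fderiv (fderiv φ) x X) ξ
  have hsec : ∀ v w : E, fderiv ℝ (fun y => fderiv ℝ φ y v) x w = (fderiv ℝ (fderiv ℝ φ) x w) v := by
    intro v w
    have := fderiv_clm_apply ((hDφ.differentiable (by simp)).differentiableAt)
      (differentiableAt_const v) (x := x)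
    rw [this]
    simp
  constructor
  · rw [hD]
    simp [vlift, tmap]
  · rw [hD]
    simp only [vlift, hlift, sff, tmap, ContinuousLinearMap.prod_apply,
      ContinuousLinearMap.comp_apply, ContinuousLinearMap.add_apply,
      ContinuousLinearMap.coe_fst', ContinuousLinearMap.coe_snd',
      ContinuousLinearMap.flip_apply, Prod.mk_add_mk, Prod.mk.injEq, hsec]
    constructor
    · simp
    · simp only [map_neg]
      abel
end
end

section
/- In the setting of a Riemannian submersion φ : M → N with Φ = φ_* : TM → TN and Cheeger–Gromoll type metrics on TM and TN: for η ∈ V^φ_x (vertical for φ) and ξ ∈ T_xM, the vertical lift η^v_ξ lies in V^Φ_ξ = ker Φ_*; and for X ∈ H^φ_x (horizontal for φ), the horizontal lift X^h_ξ lies in H^Φ_ξ, the h_{p,q,α}-orthogonal complement of ker Φ_*. -/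
open Function
open scoped BigOperators

noncomputable section

variable {E : Type*} [NormedAddCommGroup E] [NormedSpace ℝ E]
variable {F : Type*} [NormedAddCommGroup F] [NormedSpace ℝ F]

/-- Corollary 1. For a submersion `φ : M → N` with `Φ = φ_* : TM → TN`
and Cheeger–Gromoll type metrics on the tangent bundles: for `η` vertical for `φ`, the
vertical lift `η^v_ξ` lies in `V^Φ_ξ = ker Φ_*`; and for `X` horizontal for `φ`, the
horizontal lift `X^h_ξ` lies in `H^Φ_ξ`, the `h_{p,q,α}`-orthogonal complement of `ker Φ_*`. -/
theorem stmt6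
    (gM : E → E → E → ℝ) (gN : F → F → F → ℝ)
    (ΓM : E → E → E → E) (ΓN : F → F → F → F)
    (hgM : IsMetric gM) (hgN : IsMetric gN)
    (hΓM : IsLeviCivita gM ΓM) (hΓN : IsLeviCivita gN ΓN)
    (φ : E → F) (hφ : ContDiff ℝ (⊤ : ℕ∞) φ)
    (hsub : ∀ y, Surjective (fderiv ℝ φ y))
    (p q α : ℝ) (hq : 0 ≤ q) (hα : 0 < α)
    (x ξ : E) :
    (∀ η : E, fderiv ℝ φ x η = 0 →
      fderiv ℝ (tmap φ) (x, ξ) (vlift η) = 0) ∧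
    (∀ X ∈ Hor gM φ x, ∀ A ∈ LinearMap.ker (fderiv ℝ (tmap φ) (x, ξ) : E × E →ₗ[ℝ] F × F),
      cg gM ΓM p q α x ξ (hlift ΓM x ξ X) A = 0) := by
  have hφd : Differentiable ℝ φ := hφ.differentiable (by simp)
  have htm : ContDiff ℝ (⊤ : ℕ∞) (tmap φ) := by
    have h1 : ContDiff ℝ (⊤ : ℕ∞) (fun z : E × E => φ z.1) := hφ.comp contDiff_fst
    have h2 : ContDiff ℝ (⊤ : ℕ∞) (fun z : E × E => fderiv ℝ φ z.1 z.2) :=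
      ((hφ.fderiv_right (by exact_mod_cast le_top)).comp contDiff_fst).clm_apply contDiff_snd
    exact h1.prodMk h2
  have htmd : HasFDerivAt (tmap φ) (fderiv ℝ (tmap φ) (x, ξ)) (x, ξ) :=
    (htm.differentiable (by simp) (x, ξ)).hasFDerivAt
  constructor
  · intro η hη
    have hι : HasFDerivAt (fun v : E => ((x : E), v)) (ContinuousLinearMap.inr ℝ E E) ξ :=
      hasFDerivAt_prodMk_right x ξ
    have hc : HasFDerivAt (fun v : E => tmap φ (x, v))
        ((fderiv ℝ (tmap φ) (x, ξ)).comp (ContinuousLinearMap.inr ℝ E E)) ξ :=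
      htmd.comp ξ hι
    have hdirect : HasFDerivAt (fun v : E => tmap φ (x, v))
        ((0 : E →L[ℝ] F).prod (fderiv ℝ φ x)) ξ := by
      have heq : (fun v : E => tmap φ (x, v)) = fun v => (φ x, fderiv ℝ φ x v) := rfl
      rw [heq]
      exact (hasFDerivAt_const (φ x) ξ).prodMk (fderiv ℝ φ x).hasFDerivAt
    have he := hc.unique hdirect
    have h3 := DFunLike.congr_fun he η
    simp only [ContinuousLinearMap.comp_apply, ContinuousLinearMap.inr_apply,
      ContinuousLinearMap.prod_apply, ContinuousLinearMap.zero_apply] at h3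
    have : fderiv ℝ (tmap φ) (x, ξ) (vlift η) = ((0 : F), fderiv ℝ φ x η) := h3
    rw [this, hη]
    rfl
  · intro X hX A hA
    have hAker : fderiv ℝ (tmap φ) (x, ξ) A = 0 := LinearMap.mem_ker.mp hA
    have hfst : HasFDerivAt (fun z : E × E => φ z.1)
        ((ContinuousLinearMap.fst ℝ F F).comp (fderiv ℝ (tmap φ) (x, ξ))) (x, ξ) :=
      ((ContinuousLinearMap.fst ℝ F F).hasFDerivAt).comp (x, ξ) htmd
    have hfst' : HasFDerivAt (fun z : E × E => φ z.1)
        ((fderiv ℝ φ x).comp (ContinuousLinearMap.fst ℝ E E)) (x, ξ) :=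
      (hφd x).hasFDerivAt.comp (x, ξ) hasFDerivAt_fst
    have he2 := hfst.unique hfst'
    have h4 := DFunLike.congr_fun he2 A
    simp only [ContinuousLinearMap.comp_apply, ContinuousLinearMap.coe_fst', hAker,
      ContinuousLinearMap.zero_apply, Prod.fst_zero] at h4
    have hA1 : fderiv ℝ φ x A.1 = 0 := h4.symm
    have hz : ∀ w : E, gM x 0 w = 0 := fun w => (hgM.2.2.1 x w).map_zero
    have hXA : gM x X A.1 = 0 := hX A.1 hA1
    simp only [cg, hlift, neg_add_cancel, hz, mul_zero, zero_mul, add_zero, zero_add, hXA]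
end
end

section
/- Let φ : M → N be horizontally conformal with dilatation λ, Φ = φ_* : TM → TN with Cheeger–Gromoll type metrics h_{p,q,α} on TM and h_{r,s,β} on TN. If Φ is also horizontally conformal with dilatation Λ, then for every X ∈ H^φ_x and ξ ∈ T_xM: Λ(ξ)|X|²_M = λ(x)|X|²_M + |B(X,ξ)^v_{φ_*ξ}|²_{TN}. -/
open Function
open scoped BigOperators

noncomputable section

variable {E : Type*} [NormedAddCommGroup E] [NormedSpace ℝ E]
variable {F : Type*} [NormedAddCommGroup F] [NormedSpace ℝ F]

lemma aux_lin_zero {P Q : Type*} [AddCommGroup P] [Module ℝ P] [AddCommGroup Q] [Module ℝ Q]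
    {f : P → Q} (h : IsLinearMap ℝ f) : f 0 = 0 := by
  simpa using h.map_smul 0 0

lemma aux_tmap_fderiv (φ : E → F) (hφ : ContDiff ℝ (⊤ : ℕ∞) φ) (x ξ : E) (a b : E) :
    fderiv ℝ (tmap φ) (x, ξ) (a, b)
      = (fderiv ℝ φ x a, fderiv ℝ (fderiv ℝ φ) x a ξ + fderiv ℝ φ x b) := by
  have hDφ : HasFDerivAt (fderiv ℝ φ) (fderiv ℝ (fderiv ℝ φ) x) x :=
    (((hφ.fderiv_right (m := (⊤:ℕ∞)) ENat.coe_top_add_one.le)).differentiable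
      (by simp) x).hasFDerivAt
  have h1 : HasFDerivAt (fun z : E × E => φ z.1)
      ((fderiv ℝ φ x).comp (ContinuousLinearMap.fst ℝ E E)) (x, ξ) :=
    ((hφ.differentiable (by simp) x).hasFDerivAt).comp (x, ξ) (hasFDerivAt_fst)
  have hc : HasFDerivAt (fun z : E × E => fderiv ℝ φ z.1)
      ((fderiv ℝ (fderiv ℝ φ) x).comp (ContinuousLinearMap.fst ℝ E E)) (x, ξ) :=
    hDφ.comp (x, ξ) hasFDerivAt_fst
  have h2 := hc.clm_apply (hasFDerivAt_snd (𝕜 := ℝ) (p := ((x, ξ) : E × E)))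
  have := (h1.prodMk h2).fderiv
  rw [show tmap φ = fun z : E × E => (φ z.1, fderiv ℝ φ z.1 z.2) from rfl, this]
  simp [add_comm]

lemma aux_fderiv_apply (φ : E → F) (hφ : ContDiff ℝ (⊤ : ℕ∞) φ) (x ξ a : E) :
    fderiv ℝ (fun y => fderiv ℝ φ y ξ) x a = fderiv ℝ (fderiv ℝ φ) x a ξ := by
  have hDφ : HasFDerivAt (fderiv ℝ φ) (fderiv ℝ (fderiv ℝ φ) x) x :=
    (((hφ.fderiv_right (m := (⊤:ℕ∞)) ENat.coe_top_add_one.le)).differentiable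
      (by simp) x).hasFDerivAt
  have h := (hDφ.clm_apply (hasFDerivAt_const ξ x)).fderiv
  rw [h]
  simp

/-- Lemma 5, equation (13). Let `φ` be horizontally conformal with
dilatation `λ` and let `Φ = φ_* : (TM, h_{p,q,α}) → (TN, h_{r,s,β})` be horizontally
conformal with dilatation `Λ`. Then for every horizontal `X ∈ H^φ_x` and `ξ ∈ T_x M`:
`Λ(ξ)|X|²_M = λ(x)|X|²_M + |B(X,ξ)^v_{φ_*ξ}|²_{TN}`. -/
theorem stmt12
    (gM : E → E → E → ℝ) (gN : F → F → F → ℝ)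
    (ΓM : E → E → E → E) (ΓN : F → F → F → F)
    (hgM : IsMetric gM) (hgN : IsMetric gN)
    (hΓM : IsLeviCivita gM ΓM) (hΓN : IsLeviCivita gN ΓN)
    (φ : E → F) (hφ : ContDiff ℝ (⊤ : ℕ∞) φ)
    (p q α r s β : ℝ) (hq : 0 ≤ q) (hs : 0 ≤ s) (hα : 0 < α) (hβ : 0 < β)
    (lam : E → ℝ) (hlam : ContDiff ℝ (⊤ : ℕ∞) lam)
    (hHC : HCSub gM gN φ lam)
    (Lam : E × E → ℝ)
    (hHCT : HCSubT gM ΓM p q α gN ΓN r s β φ Lam)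
    (x ξ : E) (X : E) (hX : X ∈ Hor gM φ x) :
    Lam (x, ξ) * gM x X X
      = lam x * gM x X X
        + cg gN ΓN r s β (φ x) (fderiv ℝ φ x ξ)
            (vlift (sff ΓM ΓN φ x X ξ)) (vlift (sff ΓM ΓN φ x X ξ)) := by
  obtain ⟨hTsur, hLampos, hcgconf⟩ := hHCT
  have hg0 : ∀ v, gM x 0 v = 0 := fun v => aux_lin_zero (f := fun u => gM x u v) (hgM.2.2.1 x v)
  have hg0' : ∀ v, gM x v 0 = 0 := fun v => by rw [hgM.1]; exact hg0 v
  have hgN0 : gN (φ x) 0 0 = 0 := aux_lin_zero (f := fun u => gN (φ x) u 0) (hgN.2.2.1 (φ x) 0)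
  have hΓN0 : ΓN (φ x) 0 (fderiv ℝ φ x ξ) = 0 :=
    aux_lin_zero (f := fun u => ΓN (φ x) u (fderiv ℝ φ x ξ)) (hΓN.1.1 (φ x) (fderiv ℝ φ x ξ))
  have hAhor : ((X, -ΓM x X ξ) : E × E) ∈ HorT gM ΓM p q α φ (x, ξ) := by
    intro A' hA'
    have hd := (aux_tmap_fderiv φ hφ x ξ A'.1 A'.2)
    rw [Prod.mk.eta, hA'] at hd
    have h1 : fderiv ℝ φ x A'.1 = 0 := by
      have := congrArg Prod.fst hd
      simpa using this.symm
    have hXA : gM x X A'.1 = 0 := hX A'.1 h1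
    simp [cg, hXA, hg0]
  have hcgA : cg gM ΓM p q α x ξ (X, -ΓM x X ξ) (X, -ΓM x X ξ) = gM x X X := by
    simp [cg, hg0]
  have hΦA : fderiv ℝ (tmap φ) (x, ξ) ((X, -ΓM x X ξ) : E × E)
      = (fderiv ℝ φ x X,
         fderiv ℝ (fderiv ℝ φ) x X ξ - fderiv ℝ φ x (ΓM x X ξ)) := by
    have := aux_tmap_fderiv φ hφ x ξ X (-ΓM x X ξ)
    simpa [sub_eq_add_neg] using this
  have hsff : sff ΓM ΓN φ x X ξ
      = fderiv ℝ (fderiv ℝ φ) x X ξ + ΓN (φ x) (fderiv ℝ φ x X) (fderiv ℝ φ x ξ)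
        - fderiv ℝ φ x (ΓM x X ξ) := by
    rw [sff, aux_fderiv_apply φ hφ x ξ X]
  have hKΦ : fderiv ℝ (fderiv ℝ φ) x X ξ - fderiv ℝ φ x (ΓM x X ξ)
      + ΓN (φ x) (fderiv ℝ φ x X) (fderiv ℝ φ x ξ) = sff ΓM ΓN φ x X ξ := by
    rw [hsff]; abel
  have hconf : gN (φ x) (fderiv ℝ φ x X) (fderiv ℝ φ x X) = lam x * gM x X X :=
    hHC.2.2 x X hX X hX
  have key := hcgconf (x, ξ) _ hAhor _ hAhor
  simp only at key
  rw [hcgA, hΦA] at key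
  simp only [cg, vlift] at key ⊢
  simp only [hΓN0, add_zero, hgN0, hKΦ, hconf] at key ⊢
  linarith [key]

end
end

section
/- Assume dim N ≥ 2 and Φ = φ_* : TM → TN is horizontally conformal with dilatation Λ, with Cheeger–Gromoll type metrics h_{p,q,α} and h_{r,s,β} on TM and TN. Then φ is horizontally conformal with constant dilatation λ = Λ(0), Λ is constant equal to λ, and the horizontal distribution H^φ is integrable. -/
open Function
open scoped BigOperators

noncomputable section

variable {E : Type*} [NormedAddCommGroup E] [NormedSpace ℝ E]
variable {F : Type*} [NormedAddCommGroup F] [NormedSpace ℝ F]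

/-- A symmetric positive definite bilinear form. -/
structure PosBil (P : Type*) [NormedAddCommGroup P] [NormedSpace ℝ P] where
  b : P → P → ℝ
  symm : ∀ u v, b u v = b v u
  linL : ∀ v, IsLinearMap ℝ (fun u => b u v)
  pos : ∀ u, u ≠ 0 → 0 < b u u

namespace PosBil

variable {P : Type*} [NormedAddCommGroup P] [NormedSpace ℝ P] (B : PosBil P)

lemma add_left (u u' v : P) : B.b (u + u') v = B.b u v + B.b u' v := (B.linL v).map_add u u'
lemma smul_left (c : ℝ) (u v : P) : B.b (c • u) v = c * B.b u v := (B.linL v).map_smul c u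
lemma zero_left (v : P) : B.b 0 v = 0 := by
  have := (B.linL v).map_smul 0 0; simpa using this
lemma add_right (u v v' : P) : B.b u (v + v') = B.b u v + B.b u v' := by
  rw [B.symm, B.add_left, B.symm v u, B.symm v' u]
lemma smul_right (c : ℝ) (u v : P) : B.b u (c • v) = c * B.b u v := by
  rw [B.symm, B.smul_left, B.symm]
lemma zero_right (u : P) : B.b u 0 = 0 := by rw [B.symm, B.zero_left]
lemma sub_left (u u' v : P) : B.b (u - u') v = B.b u v - B.b u' v := by
  have h := ((B.linL v).mk' _).map_sub u u'
  simpa using h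
lemma sub_right (u v v' : P) : B.b u (v - v') = B.b u v - B.b u v' := by
  rw [B.symm, B.sub_left, B.symm v u, B.symm v' u]
lemma neg_left (u v : P) : B.b (-u) v = - B.b u v := by
  have h := B.sub_left 0 u v; simpa [B.zero_left] using h
lemma nonneg (u : P) : 0 ≤ B.b u u := by
  by_cases h : u = 0
  · simp [h, B.zero_left]
  · exact le_of_lt (B.pos u h)
lemma eq_zero_of_self (u : P) (h : B.b u u = 0) : u = 0 := by
  by_contra hne; exact absurd h (ne_of_gt (B.pos u hne))

/-- bundled bilinear map -/
def toLM : P →ₗ[ℝ] P →ₗ[ℝ] ℝ :=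
  LinearMap.mk₂ ℝ B.b (fun u u' v => B.add_left u u' v) (fun c u v => B.smul_left c u v)
    (fun u v v' => B.add_right u v v') (fun c u v => B.smul_right c u v)

@[simp] lemma toLM_apply (u v : P) : B.toLM u v = B.b u v := rfl

/-- Riesz representation on a subspace. -/
lemma riesz [FiniteDimensional ℝ P] (V : Submodule ℝ P) (ℓ : P →ₗ[ℝ] ℝ) :
    ∃ v₀ ∈ V, ∀ a ∈ V, B.b v₀ a = ℓ a := by
  classical
  let T : V →ₗ[ℝ] Module.Dual ℝ V :=
    { toFun := fun v => (B.toLM v.1).comp V.subtype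
      map_add' := by intro v w; ext a; simp [B.add_left]
      map_smul' := by intro c v; ext a; simp [B.smul_left] }
  have hinj : Function.Injective T := by
    rw [← LinearMap.ker_eq_bot]
    ext v
    simp only [LinearMap.mem_ker, Submodule.mem_bot]
    constructor
    · intro hv
      have := congrArg (fun f => f v) hv
      simp only [LinearMap.comp_apply, LinearMap.zero_apply] at this
      have : B.b v.1 v.1 = 0 := this
      exact Subtype.ext (B.eq_zero_of_self _ this)
    · intro hv; subst hv; ext a; simp [B.zero_left]
  have hfr : Module.finrank ℝ V = Module.finrank ℝ (Module.Dual ℝ V) :=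
    (Subspace.dual_finrank_eq).symm
  have hsurj : Function.Surjective T :=
    (LinearMap.injective_iff_surjective_of_finrank_eq_finrank hfr).mp hinj
  obtain ⟨v₀, hv₀⟩ := hsurj (ℓ.comp V.subtype)
  refine ⟨v₀.1, v₀.2, fun a ha => ?_⟩
  have := congrArg (fun f => f ⟨a, ha⟩) hv₀
  exact this

/-- orthogonal projection onto a subspace -/
lemma proj [FiniteDimensional ℝ P] (V : Submodule ℝ P) (e : P) :
    ∃ ev ∈ V, ∀ a ∈ V, B.b (e - ev) a = 0 := by
  obtain ⟨v₀, hv₀V, hv₀⟩ := B.riesz V (B.toLM e)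
  refine ⟨v₀, hv₀V, fun a ha => ?_⟩
  rw [B.sub_left, hv₀ a ha]; simp

end PosBil


namespace IsMetric

variable {P : Type*} [NormedAddCommGroup P] [NormedSpace ℝ P]
variable {g : P → P → P → ℝ}

/-- the pointwise positive bilinear form of a metric -/
def pb (hg : IsMetric g) (x : P) : PosBil P :=
  { b := g x, symm := hg.1 x, linL := hg.2.2.1 x, pos := hg.2.1 x }

@[simp] lemma pb_apply (hg : IsMetric g) (x u v : P) : (hg.pb x).b u v = g x u v := rfl

variable [FiniteDimensional ℝ P]

/-- the metric as a continuous-linear-map valued function -/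
def clm (hg : IsMetric g) (x : P) : P →L[ℝ] P →L[ℝ] ℝ :=
  LinearMap.toContinuousLinearMap
    { toFun := fun u => LinearMap.toContinuousLinearMap ((hg.pb x).toLM u)
      map_add' := by intro u u'; simp only [map_add]
      map_smul' := by intro c u; simp only [map_smul, RingHom.id_apply] }

@[simp] lemma clm_apply (hg : IsMetric g) (x u v : P) : hg.clm x u v = g x u v := by
  simp [clm]

lemma clm_contDiff (hg : IsMetric g) : ContDiff ℝ (⊤ : ℕ∞) (fun x => hg.clm x) := by
  classical
  set ι := Module.Basis.ofVectorSpaceIndex ℝ P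
  set bb : Module.Basis ι ℝ P := Module.Basis.ofVectorSpace ℝ P
  haveI : Fintype ι := FiniteDimensional.fintypeBasisIndex bb
  have hrepr : (fun x => hg.clm x) = fun x : P =>
      ∑ i : ι, ∑ j : ι, g x (bb i) (bb j) •
        ((LinearMap.toContinuousLinearMap (bb.coord i)).smulRight
          (LinearMap.toContinuousLinearMap (bb.coord j))) := by
    funext x
    apply ContinuousLinearMap.ext; intro u
    apply ContinuousLinearMap.ext; intro v
    have hexp : ∀ w : P, w = ∑ i : ι, bb.repr w i • bb i := fun w => (bb.sum_repr w).symm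
    have h1 : g x u v = ∑ i : ι, ∑ j : ι, bb.repr u i * bb.repr v j * g x (bb i) (bb j) := by
      conv_lhs => rw [hexp u]
      rw [show g x (∑ i : ι, bb.repr u i • bb i) v
          = ((hg.pb x).toLM (∑ i : ι, bb.repr u i • bb i)) v from rfl]
      rw [map_sum]
      rw [LinearMap.sum_apply]
      refine Finset.sum_congr rfl (fun i _ => ?_)
      rw [map_smul]
      simp only [LinearMap.smul_apply, smul_eq_mul]
      conv_lhs => rw [hexp v]
      rw [show ((hg.pb x).toLM (bb i)) (∑ j : ι, bb.repr v j • bb j)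
          = ∑ j : ι, bb.repr v j * g x (bb i) (bb j) from by
            rw [map_sum]; refine Finset.sum_congr rfl (fun j _ => ?_);
            rw [map_smul]; simp]
      rw [Finset.mul_sum]
      refine Finset.sum_congr rfl (fun j _ => ?_); ring
    simp only [ContinuousLinearMap.sum_apply, ContinuousLinearMap.smul_apply,
      ContinuousLinearMap.smulRight_apply, ContinuousLinearMap.coe_coe,
      LinearMap.coe_toContinuousLinearMap', Module.Basis.coord_apply]
    rw [clm_apply, h1]
    simp only [smul_eq_mul]
    refine Finset.sum_congr rfl (fun i _ => ?_)
    refine Finset.sum_congr rfl (fun j _ => ?_)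
    ring
  rw [hrepr]
  apply ContDiff.sum; intro i _
  apply ContDiff.sum; intro j _
  haveI : IsBoundedSMul ℝ (P →L[ℝ] P →L[ℝ] ℝ) :=
    @NormedSpace.toIsBoundedSMul ℝ (P →L[ℝ] P →L[ℝ] ℝ) _ _ _
  exact (hg.2.2.2 (bb i) (bb j)).smul contDiff_const

end IsMetric
section CalcTest
variable {E : Type*} [NormedAddCommGroup E] [NormedSpace ℝ E]
variable {P : Type*} [NormedAddCommGroup P] [NormedSpace ℝ P] [FiniteDimensional ℝ P]
variable {g : P → P → P → ℝ}

namespace IsMetric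

lemma clm_hasFDerivAt (hg : IsMetric g) (z : P) :
    HasFDerivAt (fun p => hg.clm p) (fderiv ℝ (fun p => hg.clm p) z) z :=
  (hg.clm_contDiff.differentiable (by simp) z).hasFDerivAt

lemma fderiv_pt (hg : IsMetric g) (z a b : P) (w : P) :
    fderiv ℝ (fun p => g p a b) z w = ((fderiv ℝ (fun p => hg.clm p) z) w) a b := by
  have h1 : HasFDerivAt (fun p => (hg.clm p) a)
      ((fderiv ℝ (fun p => hg.clm p) z).flip a) z := by
    have := (hg.clm_hasFDerivAt z).clm_apply (hasFDerivAt_const a z)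
    simpa using this
  have h2 : HasFDerivAt (fun p => (hg.clm p) a b)
      (((fderiv ℝ (fun p => hg.clm p) z).flip a).flip b) z := by
    have := h1.clm_apply (hasFDerivAt_const b z)
    simpa using this
  have heq : (fun p => g p a b) = (fun p => (hg.clm p) a b) := by
    funext p; rw [clm_apply]
  rw [heq, h2.fderiv]
  simp

lemma diff_pt (hg : IsMetric g) (z a b : P) :
    DifferentiableAt ℝ (fun p => g p a b) z :=
  ((hg.2.2.2 a b).differentiable (by simp)) z

/-- Product rule for `y ↦ g (c y) (A y) (B y)`. -/
lemma fderiv_g3 (hg : IsMetric g) {c A B : E → P} {c' A' B' : E →L[ℝ] P} {x : E}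
    (hc : HasFDerivAt c c' x) (hA : HasFDerivAt A A' x) (hB : HasFDerivAt B B' x) :
    DifferentiableAt ℝ (fun y => g (c y) (A y) (B y)) x ∧
    ∀ d, fderiv ℝ (fun y => g (c y) (A y) (B y)) x d
      = fderiv ℝ (fun p => g p (A x) (B x)) (c x) (c' d)
        + g (c x) (A' d) (B x) + g (c x) (A x) (B' d) := by
  have hG : HasFDerivAt (fun y => hg.clm (c y))
      ((fderiv ℝ (fun p => hg.clm p) (c x)).comp c') x :=
    HasFDerivAt.comp (g := fun p => hg.clm p) x (hg.clm_hasFDerivAt (c x)) hc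
  have h2 := hG.clm_apply hA
  have h3 := h2.clm_apply hB
  have heq : (fun y => g (c y) (A y) (B y)) = (fun y => ((hg.clm (c y)) (A y)) (B y)) := by
    funext y; rw [clm_apply]
  constructor
  · rw [heq]; exact h3.differentiableAt
  · intro d
    rw [heq, h3.fderiv]
    simp only [ContinuousLinearMap.add_apply, ContinuousLinearMap.coe_comp', Function.comp_apply,
      ContinuousLinearMap.flip_apply, clm_apply]
    rw [hg.fderiv_pt (c x) (A x) (B x) (c' d)]
    ring

end IsMetric
end CalcTest

set_option linter.unusedSectionVars false

section TmapSff

variable {φ : E → F} [FiniteDimensional ℝ E] [FiniteDimensional ℝ F]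

lemma phi_hasFDerivAt (hφ : ContDiff ℝ (⊤ : ℕ∞) φ) (x : E) : HasFDerivAt φ (fderiv ℝ φ x) x :=
  ((hφ.differentiable (by simp)) x).hasFDerivAt

lemma psi_contDiff (hφ : ContDiff ℝ (⊤ : ℕ∞) φ) : ContDiff ℝ (⊤ : ℕ∞) (fderiv ℝ φ) :=
  hφ.fderiv_right (by exact_mod_cast le_top)

lemma psi_hasFDerivAt (hφ : ContDiff ℝ (⊤ : ℕ∞) φ) (x : E) :
    HasFDerivAt (fderiv ℝ φ) (fderiv ℝ (fderiv ℝ φ) x) x :=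
  (((psi_contDiff hφ).differentiable (by simp)) x).hasFDerivAt

lemma d2_symm (hφ : ContDiff ℝ (⊤ : ℕ∞) φ) (x u v : E) :
    fderiv ℝ (fderiv ℝ φ) x u v = fderiv ℝ (fderiv ℝ φ) x v u :=
  second_derivative_symmetric (fun y => phi_hasFDerivAt hφ y) (psi_hasFDerivAt hφ x) u v

lemma hasFDerivAt_dphi_apply (hφ : ContDiff ℝ (⊤ : ℕ∞) φ) (x : E) (ξ : E) :
    HasFDerivAt (fun y => fderiv ℝ φ y ξ) ((fderiv ℝ (fderiv ℝ φ) x).flip ξ) x := by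
  have := (psi_hasFDerivAt hφ x).clm_apply (hasFDerivAt_const ξ x)
  simpa using this

lemma fderiv_dphi_apply (hφ : ContDiff ℝ (⊤ : ℕ∞) φ) (x ξ d : E) :
    fderiv ℝ (fun y => fderiv ℝ φ y ξ) x d = fderiv ℝ (fderiv ℝ φ) x d ξ := by
  rw [(hasFDerivAt_dphi_apply hφ x ξ).fderiv]; rfl

lemma hasFDerivAt_tmap (hφ : ContDiff ℝ (⊤ : ℕ∞) φ) (z : E × E) :
    HasFDerivAt (tmap φ)
      (((fderiv ℝ φ z.1).comp (ContinuousLinearMap.fst ℝ E E)).prod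
        (((fderiv ℝ φ z.1).comp (ContinuousLinearMap.snd ℝ E E)) +
          (((fderiv ℝ (fderiv ℝ φ) z.1).comp (ContinuousLinearMap.fst ℝ E E)).flip z.2))) z := by
  have h1 : HasFDerivAt (fun w : E × E => φ w.1)
      ((fderiv ℝ φ z.1).comp (ContinuousLinearMap.fst ℝ E E)) z :=
    (phi_hasFDerivAt hφ z.1).comp z hasFDerivAt_fst
  have hc : HasFDerivAt (fun w : E × E => fderiv ℝ φ w.1)
      ((fderiv ℝ (fderiv ℝ φ) z.1).comp (ContinuousLinearMap.fst ℝ E E)) z :=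
    (psi_hasFDerivAt hφ z.1).comp z hasFDerivAt_fst
  have h2 := hc.clm_apply (hasFDerivAt_snd (𝕜 := ℝ) (E := E) (F := E))
  exact h1.prodMk h2

lemma fderiv_tmap (hφ : ContDiff ℝ (⊤ : ℕ∞) φ) (z A : E × E) :
    fderiv ℝ (tmap φ) z A
      = (fderiv ℝ φ z.1 A.1, fderiv ℝ (fderiv ℝ φ) z.1 A.1 z.2 + fderiv ℝ φ z.1 A.2) := by
  rw [(hasFDerivAt_tmap hφ z).fderiv]
  ext <;> simp
  · exact add_comm _ _

end TmapSff

section Horiz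

variable [FiniteDimensional ℝ E] [FiniteDimensional ℝ F]
variable {gM : E → E → E → ℝ} {gN : F → F → F → ℝ} {φ : E → F}

lemma hor_def {x X : E} : X ∈ Hor gM φ x ↔ ∀ Z, fderiv ℝ φ x Z = 0 → gM x X Z = 0 := Iff.rfl

/-- The horizontal space as a submodule. -/
def horS (hg : IsMetric gM) (φ : E → F) (x : E) : Submodule ℝ E where
  carrier := Hor gM φ x
  add_mem' := by
    intro a b ha hb
    intro Z hZ
    have h := (hg.pb x).add_left a b Z
    simp only [IsMetric.pb_apply] at h
    rw [h, ha Z hZ, hb Z hZ]; ring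
  zero_mem' := by
    intro Z hZ
    have h := (hg.pb x).zero_left Z
    simpa using h
  smul_mem' := by
    intro c a ha Z hZ
    have h := (hg.pb x).smul_left c a Z
    simp only [IsMetric.pb_apply] at h
    show gM x (c • a) Z = 0
    rw [h, ha Z hZ]; ring

lemma mem_horS {hg : IsMetric gM} {x X : E} : X ∈ horS hg φ x ↔ X ∈ Hor gM φ x := Iff.rfl

/-- decomposition into vertical and horizontal parts -/
lemma exists_vert_decomp (hg : IsMetric gM) (x e : E) :
    ∃ v, fderiv ℝ φ x v = 0 ∧ e - v ∈ Hor gM φ x := by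
  obtain ⟨v, hv, hperp⟩ := (hg.pb x).proj (LinearMap.ker (fderiv ℝ φ x : E →ₗ[ℝ] F)) e
  refine ⟨v, LinearMap.mem_ker.mp hv, fun Z hZ => ?_⟩
  exact hperp Z (LinearMap.mem_ker.mpr hZ)

lemma finrank_horS (hg : IsMetric gM) {x : E} (hs : Surjective (fderiv ℝ φ x)) :
    Module.finrank ℝ (horS hg φ x) = Module.finrank ℝ F := by
  classical
  set V : Submodule ℝ E := LinearMap.ker (fderiv ℝ φ x : E →ₗ[ℝ] F) with hV
  have hinf : horS hg φ x ⊓ V = ⊥ := by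
    rw [Submodule.eq_bot_iff]
    rintro X ⟨hX1, hX2⟩
    have h0 : gM x X X = 0 := hX1 X (LinearMap.mem_ker.mp hX2)
    exact (hg.pb x).eq_zero_of_self X h0
  have hsup : horS hg φ x ⊔ V = ⊤ := by
    rw [Submodule.eq_top_iff']
    intro e
    obtain ⟨v, hv, hh⟩ := exists_vert_decomp (φ := φ) hg x e
    exact Submodule.mem_sup.mpr ⟨e - v, hh, v, LinearMap.mem_ker.mpr hv, by abel⟩
  have h1 := Submodule.finrank_sup_add_finrank_inf_eq (horS hg φ x) V
  rw [hinf, hsup] at h1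
  have h2 := LinearMap.finrank_range_add_finrank_ker ((fderiv ℝ φ x) : E →ₗ[ℝ] F)
  have hrange : LinearMap.range ((fderiv ℝ φ x) : E →ₗ[ℝ] F) = ⊤ :=
    LinearMap.range_eq_top.mpr hs
  rw [hrange] at h2
  have hker : LinearMap.ker ((fderiv ℝ φ x) : E →ₗ[ℝ] F) = V := rfl
  rw [hker] at h2
  simp only [finrank_top, finrank_bot, add_zero] at h1 h2
  omega

/-- Conformality on the horizontal space extends to one horizontal slot and one free slot. -/
lemma conf_all (hg : IsMetric gM) {x : E} {lam : ℝ}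
    (hconf : ∀ X ∈ Hor gM φ x, ∀ Y ∈ Hor gM φ x,
      gN (φ x) (fderiv ℝ φ x X) (fderiv ℝ φ x Y) = lam * gM x X Y)
    (hgN : IsMetric gN) :
    ∀ B ∈ Hor gM φ x, ∀ v,
      gN (φ x) (fderiv ℝ φ x B) (fderiv ℝ φ x v) = lam * gM x B v := by
  intro B hB v
  obtain ⟨vv, hvv, hh⟩ := exists_vert_decomp (φ := φ) hg x v
  have h1 : fderiv ℝ φ x v = fderiv ℝ φ x (v - vv) := by
    rw [map_sub, hvv, sub_zero]
  rw [h1, hconf B hB (v - vv) hh]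
  have h2 : gM x B (v - vv) = gM x B v := by
    have hs := (hg.pb x).sub_right B v vv
    simp only [IsMetric.pb_apply] at hs
    have hz : gM x B vv = 0 := hB vv hvv
    rw [hs, hz, sub_zero]
  rw [h2]

end Horiz

section CoreLemmas

variable [FiniteDimensional ℝ E] [FiniteDimensional ℝ F]
variable {gM : E → E → E → ℝ} {gN : F → F → F → ℝ}
variable {ΓM : E → E → E → E} {ΓN : F → F → F → F}
variable {φ : E → F} {p q α r s β : ℝ}

lemma sff_eq (hφ : ContDiff ℝ (⊤ : ℕ∞) φ) (x X Y : E) :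
    sff ΓM ΓN φ x X Y = fderiv ℝ (fderiv ℝ φ) x X Y
      + ΓN (φ x) (fderiv ℝ φ x X) (fderiv ℝ φ x Y) - fderiv ℝ φ x (ΓM x X Y) := by
  rw [sff, fderiv_dphi_apply hφ]

lemma sff_zero_right (hφ : ContDiff ℝ (⊤ : ℕ∞) φ)
    (hΓM : IsChristoffel ΓM) (hΓN : IsChristoffel ΓN) (x X : E) :
    sff ΓM ΓN φ x X 0 = 0 := by
  rw [sff_eq hφ]
  have h1 : fderiv ℝ (fderiv ℝ φ) x X 0 = 0 := map_zero _
  have h2 : ΓN (φ x) (fderiv ℝ φ x X) (fderiv ℝ φ x 0) = 0 := by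
    rw [map_zero]; exact (hΓN.2.1 (φ x) (fderiv ℝ φ x X)).map_zero
  have h3 : ΓM x X 0 = 0 := (hΓM.2.1 x X).map_zero
  rw [h1, h2, h3, map_zero]; abel

lemma sff_linear_left (hΓM : IsChristoffel ΓM) (hΓN : IsChristoffel ΓN) (x ξ : E) :
    IsLinearMap ℝ (fun X => sff ΓM ΓN φ x X ξ) := by
  constructor
  · intro X X'
    simp only [sff, map_add]
    rw [(hΓN.1 (φ x) (fderiv ℝ φ x ξ)).map_add, (hΓM.1 x ξ).map_add, map_add]
    abel
  · intro c X
    simp only [sff, map_smul]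
    rw [(hΓN.1 (φ x) (fderiv ℝ φ x ξ)).map_smul, (hΓM.1 x ξ).map_smul, map_smul]
    simp only [ContinuousLinearMap.smul_apply, smul_sub, smul_add]

lemma sff_symm (hφ : ContDiff ℝ (⊤ : ℕ∞) φ)
    (hΓM : ∀ x u v, ΓM x u v = ΓM x v u) (hΓN : ∀ x u v, ΓN x u v = ΓN x v u) (x X Y : E) :
    sff ΓM ΓN φ x X Y = sff ΓM ΓN φ x Y X := by
  rw [sff_eq hφ, sff_eq hφ, d2_symm hφ, hΓM x X Y, hΓN (φ x)]

/-- characterization of the kernel of `Φ_*`. -/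
lemma ker_tmap (hφ : ContDiff ℝ (⊤ : ℕ∞) φ) (hΓN : IsChristoffel ΓN) {x ξ a b : E}
    (h : fderiv ℝ (tmap φ) (x, ξ) (a, b) = 0) :
    fderiv ℝ φ x a = 0 ∧
      fderiv ℝ φ x (b + ΓM x a ξ) = - sff ΓM ΓN φ x a ξ := by
  have h2 := fderiv_tmap hφ (x, ξ) (a, b)
  rw [h] at h2
  have ha : fderiv ℝ φ x a = 0 := by
    have := congrArg Prod.fst h2; simpa using this.symm
  have hb : fderiv ℝ (fderiv ℝ φ) x a ξ + fderiv ℝ φ x b = 0 := by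
    have := congrArg Prod.snd h2; simpa using this.symm
  refine ⟨ha, ?_⟩
  rw [sff_eq hφ, ha]
  have hΓ0 : ΓN (φ x) (0 : F) (fderiv ℝ φ x ξ) = 0 :=
    (hΓN.1 (φ x) (fderiv ℝ φ x ξ)).map_zero
  rw [hΓ0, map_add]
  have : fderiv ℝ φ x b = - fderiv ℝ (fderiv ℝ φ) x a ξ := by linear_combination (norm := abel) hb
  rw [this]; abel

/-- `Φ_*` applied to the standard elements. -/
lemma tmap_apply_mk (hφ : ContDiff ℝ (⊤ : ℕ∞) φ) (x ξ c u : E) :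
    fderiv ℝ (tmap φ) (x, ξ) (c, u - ΓM x c ξ)
      = (fderiv ℝ φ x c,
          (fderiv ℝ φ x u + sff ΓM ΓN φ x c ξ)
            - ΓN (φ x) (fderiv ℝ φ x c) (fderiv ℝ φ x ξ)) := by
  rw [fderiv_tmap hφ]
  refine Prod.ext rfl ?_
  show fderiv ℝ (fderiv ℝ φ) x c ξ + fderiv ℝ φ x (u - ΓM x c ξ) = _
  rw [map_sub, sff_eq hφ]
  abel

/-- `cg` on the standard elements (domain side). -/
lemma cg_mk (x ξ c u c' u' : E) :
    cg gM ΓM p q α x ξ (c, u - ΓM x c ξ) (c', u' - ΓM x c' ξ)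
      = gM x c c' + ((1 + α * gM x ξ ξ)⁻¹) ^ p *
          (gM x u u' + q * gM x u ξ * gM x u' ξ) := by
  simp only [cg, sub_add_cancel]

/-- `cg` on the standard elements (target side). -/
lemma cg_mk' (y η : F) (w T w' T' : F) :
    cg gN ΓN r s β y η (w, T - ΓN y w η) (w', T' - ΓN y w' η)
      = gN y w w' + ((1 + β * gN y η η)⁻¹) ^ r *
          (gN y T T' + s * gN y T η * gN y T' η) := by
  simp only [cg, sub_add_cancel]

end CoreLemmas

/-- the deformed form `g̃ = g + q g(·,ξ) g(·,ξ)` -/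
def PosBil.tilde {P : Type*} [NormedAddCommGroup P] [NormedSpace ℝ P]
    (B : PosBil P) (ξ : P) (q : ℝ) (hq : 0 ≤ q) : PosBil P where
  b := fun u v => B.b u v + q * B.b u ξ * B.b v ξ
  symm := fun u v => by rw [B.symm u v]; ring
  linL := fun v => by
    constructor
    · intro u u'; rw [B.add_left, B.add_left]; ring
    · intro c u; rw [B.smul_left, B.smul_left]; simp; ring
  pos := fun u hu => by
    have h1 := B.pos u hu
    have h2 : 0 ≤ q * B.b u ξ * B.b u ξ := by nlinarith [sq_nonneg (B.b u ξ)]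
    nlinarith

section Membership

variable [FiniteDimensional ℝ E] [FiniteDimensional ℝ F]
variable {gM : E → E → E → ℝ} {gN : F → F → F → ℝ}
variable {ΓM : E → E → E → E} {ΓN : F → F → F → F}
variable {φ : E → F} {p q α r s β : ℝ}

lemma mem_horT_hlift (hφ : ContDiff ℝ (⊤ : ℕ∞) φ) (hgM : IsMetric gM)
    (hΓN : IsChristoffel ΓN) {x ξ X : E} (hX : X ∈ Hor gM φ x) :
    ((X, (0:E) - ΓM x X ξ)) ∈ HorT gM ΓM p q α φ (x, ξ) := by
  intro A' hA'
  have hA'' : fderiv ℝ (tmap φ) (x, ξ) (A'.1, A'.2) = 0 := by rwa [Prod.mk.eta]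
  obtain ⟨ha, hk⟩ := ker_tmap (ΓM := ΓM) hφ hΓN hA''
  show cg gM ΓM p q α x ξ _ _ = 0
  simp only [cg, sub_add_cancel]
  have hz1 : gM x (0:E) (A'.2 + ΓM x A'.1 ξ) = 0 := (hgM.pb x).zero_left _
  have hz2 : gM x (0:E) ξ = 0 := (hgM.pb x).zero_left _
  rw [hz1, hz2, hX A'.1 ha]
  ring

lemma mem_horT_vert (hgM : IsMetric gM) (hφ : ContDiff ℝ (⊤ : ℕ∞) φ)
    (hΓM : IsChristoffel ΓM) (hΓN : IsChristoffel ΓN) {x : E}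
    (hsub : Surjective (fderiv ℝ φ x)) (hq : 0 ≤ q) {ξ u : E}
    (hu : ∀ a, fderiv ℝ φ x a = 0 → gM x u a + q * gM x u ξ * gM x a ξ = 0) :
    ∃ Xv, fderiv ℝ φ x Xv = 0 ∧
      ((Xv, u - ΓM x Xv ξ)) ∈ HorT gM ΓM p q α φ (x, ξ) := by
  classical
  set ω : ℝ := ((1 + α * gM x ξ ξ)⁻¹) ^ p with hω
  set Bt : PosBil E := (hgM.pb x).tilde ξ q hq with hBt
  have hBtapp : ∀ a c : E, Bt.b a c = gM x a c + q * gM x a ξ * gM x c ξ := fun a c => rfl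
  obtain ⟨L, hL⟩ := LinearMap.exists_rightInverse_of_surjective
    ((fderiv ℝ φ x : E →ₗ[ℝ] F)) (LinearMap.range_eq_top.mpr hsub)
  have hLap : ∀ w : F, fderiv ℝ φ x (L w) = w := by
    intro w
    have := congrArg (fun f => f w) hL
    simpa using this
  set sffL : E →ₗ[ℝ] F := IsLinearMap.mk' _ (sff_linear_left (φ := φ) hΓM hΓN x ξ) with hsffL
  have hsffLap : ∀ a : E, sffL a = sff ΓM ΓN φ x a ξ := fun a => rfl
  set ℓ : E →ₗ[ℝ] ℝ := ω • ((Bt.toLM u) ∘ₗ (L ∘ₗ sffL)) with hℓ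
  obtain ⟨Xv, hXvV, hXv⟩ := (hgM.pb x).riesz (LinearMap.ker (fderiv ℝ φ x : E →ₗ[ℝ] F)) ℓ
  refine ⟨Xv, LinearMap.mem_ker.mp hXvV, ?_⟩
  intro A' hA'
  have hA'' : fderiv ℝ (tmap φ) (x, ξ) (A'.1, A'.2) = 0 := by rwa [Prod.mk.eta]
  obtain ⟨ha, hk⟩ := ker_tmap (ΓM := ΓM) hφ hΓN hA''
  show cg gM ΓM p q α x ξ _ _ = 0
  simp only [cg, sub_add_cancel]
  set k : E := A'.2 + ΓM x A'.1 ξ with hkdef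
  -- k + L (sffL A'.1) is vertical
  have hvert : fderiv ℝ φ x (k + L (sffL A'.1)) = 0 := by
    rw [map_add, hk, hLap, hsffLap]; abel
  have h1 : Bt.b u (k + L (sffL A'.1)) = 0 := by
    rw [hBtapp]; exact hu _ hvert
  have h2 : Bt.b u k = - Bt.b u (L (sffL A'.1)) := by
    have := Bt.add_right u k (L (sffL A'.1))
    rw [h1] at this; linarith
  have h3 : gM x Xv A'.1 = ω * Bt.b u (L (sffL A'.1)) := by
    have h5 : gM x Xv A'.1 = ℓ A'.1 := hXv A'.1 (LinearMap.mem_ker.mpr ha)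
    rw [h5, hℓ]
    simp only [LinearMap.smul_apply, LinearMap.comp_apply, PosBil.toLM_apply, smul_eq_mul]
  have h4 : gM x u k + q * gM x u ξ * gM x k ξ = Bt.b u k := (hBtapp u k).symm
  rw [h3, ← hω, h4, h2]
  ring

end Membership

section Core

variable [FiniteDimensional ℝ E] [FiniteDimensional ℝ F]
variable {gM : E → E → E → ℝ} {gN : F → F → F → ℝ}
variable {ΓM : E → E → E → E} {ΓN : F → F → F → F}
variable {φ : E → F} {p q α r s β : ℝ} {Lam : E × E → ℝ}

lemma IsMetric.gzL {P : Type*} [NormedAddCommGroup P] [NormedSpace ℝ P]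
    {g : P → P → P → ℝ} (hg : IsMetric g) (x v : P) : g x 0 v = 0 := (hg.pb x).zero_left v

lemma IsMetric.gzR {P : Type*} [NormedAddCommGroup P] [NormedSpace ℝ P]
    {g : P → P → P → ℝ} (hg : IsMetric g) (x v : P) : g x v 0 = 0 := (hg.pb x).zero_right v

lemma IsMetric.gaddL {P : Type*} [NormedAddCommGroup P] [NormedSpace ℝ P]
    {g : P → P → P → ℝ} (hg : IsMetric g) (x : P) (u u' v : P) :
    g x (u + u') v = g x u v + g x u' v := (hg.pb x).add_left u u' v

lemma IsMetric.gaddR {P : Type*} [NormedAddCommGroup P] [NormedSpace ℝ P]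
    {g : P → P → P → ℝ} (hg : IsMetric g) (x : P) (u v v' : P) :
    g x u (v + v') = g x u v + g x u v' := (hg.pb x).add_right u v v'

lemma IsMetric.gsmulL {P : Type*} [NormedAddCommGroup P] [NormedSpace ℝ P]
    {g : P → P → P → ℝ} (hg : IsMetric g) (x : P) (c : ℝ) (u v : P) :
    g x (c • u) v = c * g x u v := (hg.pb x).smul_left c u v

lemma IsMetric.gsmulR {P : Type*} [NormedAddCommGroup P] [NormedSpace ℝ P]
    {g : P → P → P → ℝ} (hg : IsMetric g) (x : P) (c : ℝ) (u v : P) :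
    g x u (c • v) = c * g x u v := (hg.pb x).smul_right c u v

lemma IsMetric.gsubL {P : Type*} [NormedAddCommGroup P] [NormedSpace ℝ P]
    {g : P → P → P → ℝ} (hg : IsMetric g) (x : P) (u u' v : P) :
    g x (u - u') v = g x u v - g x u' v := (hg.pb x).sub_left u u' v

lemma IsMetric.gsubR {P : Type*} [NormedAddCommGroup P] [NormedSpace ℝ P]
    {g : P → P → P → ℝ} (hg : IsMetric g) (x : P) (u v v' : P) :
    g x u (v - v') = g x u v - g x u v' := (hg.pb x).sub_right u v v'

lemma IsMetric.gsymm {P : Type*} [NormedAddCommGroup P] [NormedSpace ℝ P]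
    {g : P → P → P → ℝ} (hg : IsMetric g) (x : P) (u v : P) :
    g x u v = g x v u := (hg.pb x).symm u v

lemma IsMetric.gnonneg {P : Type*} [NormedAddCommGroup P] [NormedSpace ℝ P]
    {g : P → P → P → ℝ} (hg : IsMetric g) (x v : P) : 0 ≤ g x v v := (hg.pb x).nonneg v

/-- The master conformality equation on standard elements. -/
lemma CEgen (hφ : ContDiff ℝ (⊤ : ℕ∞) φ)
    (hHCT : HCSubT gM ΓM p q α gN ΓN r s β φ Lam) {x ξ c u c' u' : E}
    (h1 : ((c, u - ΓM x c ξ)) ∈ HorT gM ΓM p q α φ (x, ξ))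
    (h2 : ((c', u' - ΓM x c' ξ)) ∈ HorT gM ΓM p q α φ (x, ξ)) :
    gN (φ x) (fderiv ℝ φ x c) (fderiv ℝ φ x c')
      + ((1 + β * gN (φ x) (fderiv ℝ φ x ξ) (fderiv ℝ φ x ξ))⁻¹) ^ r *
        (gN (φ x) (fderiv ℝ φ x u + sff ΓM ΓN φ x c ξ) (fderiv ℝ φ x u' + sff ΓM ΓN φ x c' ξ)
          + s * gN (φ x) (fderiv ℝ φ x u + sff ΓM ΓN φ x c ξ) (fderiv ℝ φ x ξ)
              * gN (φ x) (fderiv ℝ φ x u' + sff ΓM ΓN φ x c' ξ) (fderiv ℝ φ x ξ))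
      = Lam (x, ξ) * (gM x c c'
          + ((1 + α * gM x ξ ξ)⁻¹) ^ p * (gM x u u' + q * gM x u ξ * gM x u' ξ)) := by
  have h := hHCT.2.2 (x, ξ) _ h1 _ h2
  dsimp only at h
  rw [tmap_apply_mk (ΓM := ΓM) (ΓN := ΓN) hφ, tmap_apply_mk (ΓM := ΓM) (ΓN := ΓN) hφ] at h
  rw [cg_mk' (gN := gN) (ΓN := ΓN), cg_mk (gM := gM) (ΓM := ΓM)] at h
  exact h

/-- conformality of `φ` at each point, with dilatation `Lam (x,0)`. -/
lemma conf0 (hgM : IsMetric gM) (hgN : IsMetric gN)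
    (hΓM : IsChristoffel ΓM) (hΓN : IsChristoffel ΓN) (hφ : ContDiff ℝ (⊤ : ℕ∞) φ)
    (hHCT : HCSubT gM ΓM p q α gN ΓN r s β φ Lam) (x : E) :
    ∀ X ∈ Hor gM φ x, ∀ Y ∈ Hor gM φ x,
      gN (φ x) (fderiv ℝ φ x X) (fderiv ℝ φ x Y) = Lam (x, 0) * gM x X Y := by
  intro X hX Y hY
  have h := CEgen (ξ := (0:E)) (u := (0:E)) (u' := (0:E)) hφ hHCT
    (mem_horT_hlift hφ hgM hΓN hX) (mem_horT_hlift hφ hgM hΓN hY)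
  rw [sff_zero_right hφ hΓM hΓN, sff_zero_right hφ hΓM hΓN] at h
  simp only [map_zero, zero_add, add_zero, hgN.gzL, hgN.gzR, hgM.gzL, hgM.gzR,
    mul_zero, zero_mul, Real.one_rpow, inv_one] at h
  simpa using h

/-- Pointwise: fibre constancy of the dilatation, and vanishing of the second
fundamental form against horizontal vectors. -/
lemma corePointwise (hgM : IsMetric gM) (hgN : IsMetric gN)
    (hΓM : IsChristoffel ΓM) (hΓN : IsChristoffel ΓN) (hφ : ContDiff ℝ (⊤ : ℕ∞) φ)
    (hsub : ∀ y, Surjective (fderiv ℝ φ y))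
    (hF : 0 < Module.finrank ℝ F)
    (hq : 0 ≤ q) (hs : 0 ≤ s) (hα : 0 < α) (hβ : 0 < β)
    (hHCT : HCSubT gM ΓM p q α gN ΓN r s β φ Lam) (x ξ : E) :
    Lam (x, ξ) = Lam (x, 0) ∧ ∀ X ∈ Hor gM φ x, sff ΓM ΓN φ x X ξ = 0 := by
  classical
  have hωNpos : 0 < ((1 + β * gN (φ x) (fderiv ℝ φ x ξ) (fderiv ℝ φ x ξ))⁻¹) ^ r := by
    apply Real.rpow_pos_of_pos
    have h1 := hgN.gnonneg (φ x) (fderiv ℝ φ x ξ)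
    have : 0 < 1 + β * gN (φ x) (fderiv ℝ φ x ξ) (fderiv ℝ φ x ξ) := by nlinarith
    exact inv_pos.mpr this
  have hωpos : 0 < ((1 + α * gM x ξ ξ)⁻¹) ^ p := by
    apply Real.rpow_pos_of_pos
    have h1 := hgM.gnonneg x ξ
    have : 0 < 1 + α * gM x ξ ξ := by nlinarith
    exact inv_pos.mpr this
  have hlam0 : 0 < Lam (x, 0) := hHCT.2.1 (x, 0)
  have hlamxi : 0 < Lam (x, ξ) := hHCT.2.1 (x, ξ)
  -- equation E1
  have E1 : ∀ X ∈ Hor gM φ x, ∀ X' ∈ Hor gM φ x,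
      Lam (x, 0) * gM x X X'
        + ((1 + β * gN (φ x) (fderiv ℝ φ x ξ) (fderiv ℝ φ x ξ))⁻¹) ^ r *
          (gN (φ x) (sff ΓM ΓN φ x X ξ) (sff ΓM ΓN φ x X' ξ)
            + s * gN (φ x) (sff ΓM ΓN φ x X ξ) (fderiv ℝ φ x ξ)
                * gN (φ x) (sff ΓM ΓN φ x X' ξ) (fderiv ℝ φ x ξ))
        = Lam (x, ξ) * gM x X X' := by
    intro X hX X' hX'
    have h := CEgen (ξ := ξ) (u := (0:E)) (u' := (0:E)) hφ hHCT
      (mem_horT_hlift hφ hgM hΓN hX) (mem_horT_hlift hφ hgM hΓN hX')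
    simp only [map_zero, zero_add, hgM.gzL, hgM.gzR, mul_zero, zero_mul, add_zero] at h
    rw [conf0 hgM hgN hΓM hΓN hφ hHCT x X hX X' hX'] at h
    exact h
  -- the tilde form at ξ on the target
  have hBtNnn : ∀ w : F, 0 ≤ gN (φ x) w w
      + s * gN (φ x) w (fderiv ℝ φ x ξ) * gN (φ x) w (fderiv ℝ φ x ξ) :=
    fun w => ((hgN.pb (φ x)).tilde (fderiv ℝ φ x ξ) s hs).nonneg w
  have hBtNzero : ∀ w : F, gN (φ x) w w
      + s * gN (φ x) w (fderiv ℝ φ x ξ) * gN (φ x) w (fderiv ℝ φ x ξ) = 0 → w = 0 :=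
    fun w h => ((hgN.pb (φ x)).tilde (fderiv ℝ φ x ξ) s hs).eq_zero_of_self w h
  -- a nonzero horizontal vector
  have hntF : Nontrivial F := Module.nontrivial_of_finrank_pos hF
  obtain ⟨w₀, hw₀⟩ := exists_ne (0 : F)
  obtain ⟨e₀, he₀⟩ := hsub x w₀
  obtain ⟨v₀, hv₀, hX₀⟩ := exists_vert_decomp (φ := φ) hgM x e₀
  have hdX₀ : fderiv ℝ φ x (e₀ - v₀) = w₀ := by rw [map_sub, he₀, hv₀, sub_zero]
  have hX₀ne : (e₀ - v₀) ≠ 0 := by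
    intro h0; rw [h0, map_zero] at hdX₀; exact hw₀ hdX₀.symm
  have hgX₀ : 0 < gM x (e₀ - v₀) (e₀ - v₀) := (hgM.pb x).pos _ hX₀ne
  rcases lt_trichotomy (Lam (x, ξ)) (Lam (x, 0)) with hlt | heq | hgt
  · exfalso
    have h := E1 _ hX₀ _ hX₀
    have hBnn := hBtNnn (sff ΓM ΓN φ x (e₀ - v₀) ξ)
    nlinarith
  · refine ⟨heq, fun X hX => ?_⟩
    have h := E1 X hX X hX
    rw [heq] at h
    apply hBtNzero
    nlinarith
  · exfalso
    -- the sff map is a surjection from the horizontal space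
    have hsffadd := (sff_linear_left (φ := φ) hΓM hΓN x ξ).1
    have hsffsmul := (sff_linear_left (φ := φ) hΓM hΓN x ξ).2
    set σL : horS hgM φ x →ₗ[ℝ] F :=
      { toFun := fun X => sff ΓM ΓN φ x X.1 ξ
        map_add' := fun a b => hsffadd a.1 b.1
        map_smul' := fun c a => hsffsmul c a.1 } with hσL
    have hinj : Injective σL := by
      rw [← LinearMap.ker_eq_bot, Submodule.eq_bot_iff]
      intro X hXk
      have hX0 : sff ΓM ΓN φ x X.1 ξ = 0 := hXk
      have h := E1 X.1 X.2 X.1 X.2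
      rw [hX0] at h
      simp only [hgN.gzL, hgN.gzR, mul_zero, zero_mul, add_zero, zero_add] at h
      have hgnn := hgM.gnonneg x X.1
      have hg0 : gM x X.1 X.1 = 0 := by nlinarith
      exact Subtype.ext ((hgM.pb x).eq_zero_of_self _ hg0)
    have hsurj : Surjective σL :=
      (LinearMap.injective_iff_surjective_of_finrank_eq_finrank
        (finrank_horS hgM (hsub x))).mp hinj
    -- a nonzero tilde-orthogonal vector
    obtain ⟨vt, hvtK, hvt⟩ := ((hgM.pb x).tilde ξ q hq).proj (LinearMap.ker (fderiv ℝ φ x : E →ₗ[ℝ] F)) e₀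
    have hune : e₀ - vt ≠ 0 := by
      intro h0
      have he : e₀ = vt := by linear_combination (norm := abel) h0
      have : fderiv ℝ φ x e₀ = 0 := by rw [he]; exact LinearMap.mem_ker.mp hvtK
      rw [he₀] at this; exact hw₀ this
    have huperp : ∀ a, fderiv ℝ φ x a = 0 →
        gM x (e₀ - vt) a + q * gM x (e₀ - vt) ξ * gM x a ξ = 0 := by
      intro a ha
      exact hvt a (LinearMap.mem_ker.mpr ha)
    obtain ⟨Xv, hXvK, hmem⟩ :=
      mem_horT_vert (p := p) (α := α) hgM hφ hΓM hΓN (hsub x) hq huperp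
    -- E2
    have hE2 := CEgen (ξ := ξ) (c := Xv) (u := e₀ - vt) (c' := Xv) (u' := e₀ - vt) hφ hHCT
      hmem hmem
    rw [hXvK] at hE2
    simp only [hgN.gzL, hgN.gzR, zero_add, mul_zero, zero_mul, add_zero] at hE2
    -- E3 with the preimage of T
    obtain ⟨X₁, hX₁⟩ := hsurj (fderiv ℝ φ x (e₀ - vt) + sff ΓM ΓN φ x Xv ξ)
    have hσX₁ : sff ΓM ΓN φ x X₁.1 ξ
        = fderiv ℝ φ x (e₀ - vt) + sff ΓM ΓN φ x Xv ξ := hX₁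
    have hE3 := CEgen (ξ := ξ) (c := Xv) (u := e₀ - vt) (c' := X₁.1) (u' := (0:E)) hφ hHCT
      hmem (mem_horT_hlift hφ hgM hΓN X₁.2)
    rw [hXvK, hσX₁] at hE3
    have hgX₁Xv : gM x Xv X₁.1 = 0 := by
      rw [hgM.1 x Xv X₁.1]
      exact X₁.2 Xv hXvK
    simp only [hgN.gzL, hgN.gzR, hgM.gzL, hgM.gzR, zero_add, map_zero,
      mul_zero, zero_mul, add_zero, hgX₁Xv] at hE3
    -- positivity of the right side of E2
    have hBtuu : 0 < gM x (e₀ - vt) (e₀ - vt)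
        + q * gM x (e₀ - vt) ξ * gM x (e₀ - vt) ξ :=
      ((hgM.pb x).tilde ξ q hq).pos _ hune
    have hgXvXv : 0 ≤ gM x Xv Xv := hgM.gnonneg x Xv
    rw [hE3] at hE2
    have h1 : 0 < gM x Xv Xv + (1 + α * gM x ξ ξ)⁻¹ ^ p *
        (gM x (e₀ - vt) (e₀ - vt) + q * gM x (e₀ - vt) ξ * gM x (e₀ - vt) ξ) := by
      nlinarith [mul_pos hωpos hBtuu]
    have h2 := mul_pos hlamxi h1
    rw [← hE2] at h2
    exact lt_irrefl 0 h2

end Core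

section Dstar

variable [FiniteDimensional ℝ E] [FiniteDimensional ℝ F]
variable {gM : E → E → E → ℝ} {gN : F → F → F → ℝ}
variable {ΓM : E → E → E → E} {ΓN : F → F → F → F}
variable {φ : E → F}

/-- the functional `v ↦ gN (φ y) w (φ_* v)` -/
def nfun (hgN : IsMetric gN) (φ : E → F) (y : E) (w : F) : E →ₗ[ℝ] ℝ where
  toFun := fun v => gN (φ y) w (fderiv ℝ φ y v)
  map_add' := by
    intro a b; rw [map_add]; exact (hgN.pb (φ y)).add_right w _ _
  map_smul' := by
    intro c a; rw [map_smul]; exact (hgN.pb (φ y)).smul_right c w _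

/-- the `g`-adjoint of `φ_*` applied to `w`. -/
def dstar (hgM : IsMetric gM) (hgN : IsMetric gN) (φ : E → F) (y : E) (w : F) : E :=
  Classical.choose ((hgM.pb y).riesz ⊤ (nfun hgN φ y w))

lemma dstar_spec (hgM : IsMetric gM) (hgN : IsMetric gN) (y : E) (w : F) (v : E) :
    gM y (dstar hgM hgN φ y w) v = gN (φ y) w (fderiv ℝ φ y v) := by
  have h := Classical.choose_spec ((hgM.pb y).riesz ⊤ (nfun hgN φ y w))
  exact h.2 v Submodule.mem_top

lemma dstar_hor (hgM : IsMetric gM) (hgN : IsMetric gN) (y : E) (w : F) :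
    dstar hgM hgN φ y w ∈ Hor gM φ y := by
  intro Z hZ
  rw [dstar_spec hgM hgN y w Z, hZ, hgN.gzR]

/-- nondegeneracy of `gN` through surjectivity -/
lemma gN_nondeg (hgN : IsMetric gN) {y : E} (hs : Surjective (fderiv ℝ φ y)) {K : F}
    (h : ∀ v : E, gN (φ y) K (fderiv ℝ φ y v) = 0) : K = 0 := by
  apply (hgN.pb (φ y)).eq_zero_of_self
  obtain ⟨v, hv⟩ := hs K
  have := h v
  rw [hv] at this
  exact this

/-- `φ_* ∘ φ_*^g = λ id`. -/
lemma dstar_apply (hgM : IsMetric gM) (hgN : IsMetric gN) {y : E} {lam : ℝ}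
    (hs : Surjective (fderiv ℝ φ y))
    (hconf : ∀ X ∈ Hor gM φ y, ∀ Y ∈ Hor gM φ y,
      gN (φ y) (fderiv ℝ φ y X) (fderiv ℝ φ y Y) = lam * gM y X Y) (w : F) :
    fderiv ℝ φ y (dstar hgM hgN φ y w) = lam • w := by
  have key : ∀ v : E, gN (φ y) (fderiv ℝ φ y (dstar hgM hgN φ y w) - lam • w)
      (fderiv ℝ φ y v) = 0 := by
    intro v
    rw [hgN.gsubL, hgN.gsmulL]
    have h1 := conf_all (gN := gN) hgM hconf hgN _ (dstar_hor hgM hgN y w) v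
    rw [h1, dstar_spec hgM hgN y w v]
    ring
  have := gN_nondeg hgN hs key
  linear_combination (norm := abel) this

/-- local smooth linear algebra: differentiability of `y ↦ dstar y w`. -/
lemma dstar_diff (hgM : IsMetric gM) (hgN : IsMetric gN) (hφ : ContDiff ℝ (⊤ : ℕ∞) φ)
    (x₀ : E) (w : F) :
    DifferentiableAt ℝ (fun y => dstar hgM hgN φ y w) x₀ := by
  classical
  -- the metric as a family of invertible operators into the continuous dual
  have hJbij : ∀ y : E, Function.Bijective (hgM.clm y) := by
    intro y
    constructor
    · intro a b hab
      have h : gM y (a - b) (a - b) = 0 := by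
        have h1 : hgM.clm y (a - b) = 0 := by
          rw [map_sub, hab, sub_self]
        have h2 := congrArg (fun f => f (a - b)) h1
        simp only [map_sub, ContinuousLinearMap.sub_apply, ContinuousLinearMap.zero_apply,
          IsMetric.clm_apply] at h2
        rw [hgM.gsubL, hgM.gsubR, hgM.gsubR]
        have hsy := hgM.gsymm y a b
        linarith
      have := (hgM.pb y).eq_zero_of_self _ h
      linear_combination (norm := abel) this
    · have hfr : Module.finrank ℝ E = Module.finrank ℝ (E →L[ℝ] ℝ) := by
        rw [← (LinearMap.toContinuousLinearMap (𝕜 := ℝ) (E := E) (F' := ℝ)).finrank_eq]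
        exact (Subspace.dual_finrank_eq (K := ℝ) (V := E)).symm
      exact (LinearMap.injective_iff_surjective_of_finrank_eq_finrank hfr).mp
        (by
          intro a b hab
          have h : gM y (a - b) (a - b) = 0 := by
            have h1 : hgM.clm y (a - b) = 0 := by
              simp only [ContinuousLinearMap.coe_coe] at hab ⊢
              rw [map_sub, hab, sub_self]
            have h2 := congrArg (fun f => f (a - b)) h1
            simp only [map_sub, ContinuousLinearMap.sub_apply, ContinuousLinearMap.zero_apply,
              IsMetric.clm_apply] at h2
            rw [hgM.gsubL, hgM.gsubR, hgM.gsubR]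
            have hsy := hgM.gsymm y a b
            linarith
          have := (hgM.pb y).eq_zero_of_self _ h
          linear_combination (norm := abel) this)
  -- inverse of the metric at the base point
  let Jeq : E ≃ₗ[ℝ] (E →L[ℝ] ℝ) :=
    LinearEquiv.ofBijective ((hgM.clm x₀ : E →L[ℝ] (E →L[ℝ] ℝ)) : E →ₗ[ℝ] (E →L[ℝ] ℝ))
      (hJbij x₀)
  let K₀ : (E →L[ℝ] ℝ) →L[ℝ] E := LinearMap.toContinuousLinearMap Jeq.symm.toLinearMap
  have hK₀' : ∀ e : E, K₀ (hgM.clm x₀ e) = e := fun e => Jeq.symm_apply_apply e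
  -- the family of operators
  set C : E → (E →L[ℝ] E) := fun y => K₀.comp (hgM.clm y) with hC
  have hCdiff : ContDiff ℝ (⊤ : ℕ∞) C := contDiff_const.clm_comp hgM.clm_contDiff
  have hCbij : ∀ y, Function.Bijective (C y) := by
    intro y
    have h1 : Function.Bijective K₀ := Jeq.symm.bijective
    exact h1.comp (hJbij y)
  -- units
  have hCunit : ∀ y, ∃ u : (E →L[ℝ] E)ˣ, (u : E →L[ℝ] E) = C y := by
    intro y
    let Ceq : E ≃ₗ[ℝ] E := LinearEquiv.ofBijective
      ((C y : E →L[ℝ] E) : E →ₗ[ℝ] E) (hCbij y)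
    let Cinv : E →L[ℝ] E := LinearMap.toContinuousLinearMap Ceq.symm.toLinearMap
    refine ⟨⟨C y, Cinv, ?_, ?_⟩, rfl⟩
    · ext e
      exact Ceq.apply_symm_apply e
    · ext e
      exact Ceq.symm_apply_apply e
  have hC1 : C x₀ = 1 := by
    ext e
    exact hK₀' e
  -- the right-hand side family
  set ccf : E → (E →L[ℝ] ℝ) := fun y => ((hgN.clm (φ y)) w).comp (fderiv ℝ φ y) with hccf
  have hccfdiff : ContDiff ℝ (⊤ : ℕ∞) ccf := by
    apply ContDiff.clm_comp
    · exact (hgN.clm_contDiff.comp hφ).clm_apply contDiff_const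
    · exact psi_contDiff hφ
  have hccdiff : ContDiff ℝ (⊤ : ℕ∞) (fun y => K₀ (ccf y)) :=
    K₀.contDiff.comp hccfdiff
  -- the representation of dstar
  have hrepr : ∀ y, dstar hgM hgN φ y w = Ring.inverse (C y) (K₀ (ccf y)) := by
    intro y
    obtain ⟨u, hu⟩ := hCunit y
    have hinv : Ring.inverse (C y) = ((u⁻¹ : (E →L[ℝ] E)ˣ) : E →L[ℝ] E) := by
      rw [← hu, Ring.inverse_unit]
    have hCd : C y (dstar hgM hgN φ y w) = K₀ (ccf y) := by
      have hJd : hgM.clm y (dstar hgM hgN φ y w) = ccf y := by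
        ext v
        rw [IsMetric.clm_apply, dstar_spec hgM hgN y w v]
        rfl
      show K₀ (hgM.clm y (dstar hgM hgN φ y w)) = K₀ (ccf y)
      rw [hJd]
    rw [hinv, ← hCd]
    have := congrArg (fun f : E →L[ℝ] E => f (dstar hgM hgN φ y w)) u.inv_mul
    simp only [ContinuousLinearMap.one_apply] at this
    rw [ContinuousLinearMap.mul_apply, hu] at this
    exact this.symm
  have heq : (fun y => dstar hgM hgN φ y w) = fun y => Ring.inverse (C y) (K₀ (ccf y)) :=
    funext hrepr
  rw [heq]
  have hinvdiff : DifferentiableAt ℝ (fun y => Ring.inverse (C y)) x₀ := by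
    have h1 : ContDiffAt ℝ 1 (Ring.inverse : (E →L[ℝ] E) → (E →L[ℝ] E)) (C x₀) := by
      rw [hC1]
      exact contDiffAt_ringInverse ℝ (1 : (E →L[ℝ] E)ˣ)
    exact (h1.comp x₀ (hCdiff.contDiffAt.of_le (by exact_mod_cast le_top))).differentiableAt
      one_ne_zero
  exact hinvdiff.clm_apply (hccdiff.differentiable (by simp) x₀)

end Dstar

section LamConst

variable [FiniteDimensional ℝ E] [FiniteDimensional ℝ F]
variable {gM : E → E → E → ℝ} {gN : F → F → F → ℝ}
variable {ΓM : E → E → E → E} {ΓN : F → F → F → F}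
variable {φ : E → F}

lemma lam_const (hgM : IsMetric gM) (hgN : IsMetric gN)
    (hΓM : IsLeviCivita gM ΓM) (hΓN : IsLeviCivita gN ΓN)
    (hφ : ContDiff ℝ (⊤ : ℕ∞) φ) (hsub : ∀ y, Surjective (fderiv ℝ φ y))
    (hF : 0 < Module.finrank ℝ F)
    {lamf : E → ℝ}
    (hconf : ∀ y, ∀ X ∈ Hor gM φ y, ∀ Y ∈ Hor gM φ y,
      gN (φ y) (fderiv ℝ φ y X) (fderiv ℝ φ y Y) = lamf y * gM y X Y)
    (hsffH : ∀ y ξ X, X ∈ Hor gM φ y → sff ΓM ΓN φ y X ξ = 0) :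
    ∀ x y, lamf x = lamf y := by
  classical
  have hntF : Nontrivial F := Module.nontrivial_of_finrank_pos hF
  obtain ⟨w, hw⟩ := exists_ne (0 : F)
  have hdstardiff : ∀ (x₀ : E) (w' : F),
      DifferentiableAt ℝ (fun y => dstar hgM hgN φ y w') x₀ :=
    fun x₀ w' => dstar_diff hgM hgN hφ x₀ w'
  have hval : ∀ y, fderiv ℝ φ y (dstar hgM hgN φ y w) = lamf y • w :=
    fun y => dstar_apply hgM hgN (hsub y) (hconf y) w
  have hdiff : Differentiable ℝ (fun y => fderiv ℝ φ y (dstar hgM hgN φ y w)) := by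
    intro y
    exact DifferentiableAt.clm_apply (psi_hasFDerivAt hφ y).differentiableAt
      (hdstardiff y w)
  have hzero : ∀ x, fderiv ℝ (fun y => fderiv ℝ φ y (dstar hgM hgN φ y w)) x = 0 := by
    intro x
    have hU : HasFDerivAt (fun y => dstar hgM hgN φ y w)
        (fderiv ℝ (fun y => dstar hgM hgN φ y w) x) x := (hdstardiff x w).hasFDerivAt
    set U' : E →L[ℝ] E := fderiv ℝ (fun y => dstar hgM hgN φ y w) x with hU'
    have hfw : HasFDerivAt (fun y => fderiv ℝ φ y (dstar hgM hgN φ y w))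
        ((fderiv ℝ φ x).comp U' + (fderiv ℝ (fderiv ℝ φ) x).flip (dstar hgM hgN φ x w)) x :=
      HasFDerivAt.clm_apply (psi_hasFDerivAt hφ x) hU
    rw [hfw.fderiv]
    ext d
    simp only [ContinuousLinearMap.add_apply, ContinuousLinearMap.coe_comp',
      Function.comp_apply, ContinuousLinearMap.flip_apply, ContinuousLinearMap.zero_apply]
    -- goal : dφ (U' d) + D2 d (dstar x w) = 0
    -- the key identity D1
    have hD1 : ∀ v d' : E, gM x (U' d') v
        = - gM x (ΓM x d' (dstar hgM hgN φ x w)) v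
          - gM x (dstar hgM hgN φ x w) (ΓM x d' v)
          + gN (φ x) (ΓN (φ x) (fderiv ℝ φ x d') w) (fderiv ℝ φ x v)
          + gN (φ x) w (ΓN (φ x) (fderiv ℝ φ x d') (fderiv ℝ φ x v))
          + gN (φ x) w (fderiv ℝ (fderiv ℝ φ) x d' v) := by
      intro v d'
      have hfun : (fun y => gM y (dstar hgM hgN φ y w) v)
          = (fun y => gN (φ y) w (fderiv ℝ φ y v)) :=
        funext (fun y => dstar_spec hgM hgN y w v)
      have hL := hgM.fderiv_g3 (hasFDerivAt_id x) hU (hasFDerivAt_const v x)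
      have hR := hgN.fderiv_g3 (phi_hasFDerivAt hφ x) (hasFDerivAt_const w x)
        (hasFDerivAt_dphi_apply hφ x v)
      simp only [id_eq, ContinuousLinearMap.id_apply, ContinuousLinearMap.zero_apply,
        ContinuousLinearMap.flip_apply] at hL hR
      have hEq : fderiv ℝ (fun y => gM y (dstar hgM hgN φ y w) v) x d'
          = fderiv ℝ (fun y => gN (φ y) w (fderiv ℝ φ y v)) x d' := by rw [hfun]
      rw [hL.2 d', hR.2 d'] at hEq
      rw [hgM.gzR, hgN.gzL] at hEq
      rw [hΓM.2.2 x (dstar hgM hgN φ x w) v d'] at hEq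
      rw [hΓN.2.2 (φ x) w (fderiv ℝ φ x v) (fderiv ℝ φ x d')] at hEq
      linarith
    -- now pair against arbitrary w'
    have hKey : ∀ w' : F,
        gN (φ x) (fderiv ℝ φ x (U' d) + fderiv ℝ (fderiv ℝ φ) x d (dstar hgM hgN φ x w)) w'
          = 0 := by
      intro w'
      have hsp' : ∀ v, gM x (dstar hgM hgN φ x w') v = gN (φ x) w' (fderiv ℝ φ x v) :=
        dstar_spec hgM hgN x w'
      have hspw : ∀ v, gM x (dstar hgM hgN φ x w) v = gN (φ x) w (fderiv ℝ φ x v) :=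
        dstar_spec hgM hgN x w
      have hP4' : fderiv ℝ φ x (dstar hgM hgN φ x w') = lamf x • w' :=
        dstar_apply hgM hgN (hsub x) (hconf x) w'
      have hP4w : fderiv ℝ φ x (dstar hgM hgN φ x w) = lamf x • w :=
        dstar_apply hgM hgN (hsub x) (hconf x) w
      have hhor' : dstar hgM hgN φ x w' ∈ Hor gM φ x := dstar_hor hgM hgN x w'
      have hhorw : dstar hgM hgN φ x w ∈ Hor gM φ x := dstar_hor hgM hgN x w
      -- abbreviations
      set h' : E := dstar hgM hgN φ x w' with hh'
      set ux : E := dstar hgM hgN φ x w with hux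
      -- sff vanishing identities
      have hD2h' : fderiv ℝ (fderiv ℝ φ) x d h'
          = fderiv ℝ φ x (ΓM x d h') - lamf x • ΓN (φ x) w' (fderiv ℝ φ x d) := by
        have h0 := hsffH x d h' hhor'
        rw [sff_eq hφ] at h0
        have h1 : fderiv ℝ (fderiv ℝ φ) x h' d
            = fderiv ℝ φ x (ΓM x h' d) - ΓN (φ x) (fderiv ℝ φ x h') (fderiv ℝ φ x d) := by
          linear_combination (norm := abel) h0
        rw [d2_symm hφ x d h', h1, hP4', hΓM.2.1 x h' d]
        rw [(hΓN.1.1 (φ x) (fderiv ℝ φ x d)).map_smul]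
      have hD2ux : fderiv ℝ (fderiv ℝ φ) x d ux
          = fderiv ℝ φ x (ΓM x d ux) - lamf x • ΓN (φ x) w (fderiv ℝ φ x d) := by
        have h0 := hsffH x d ux hhorw
        rw [sff_eq hφ] at h0
        have h1 : fderiv ℝ (fderiv ℝ φ) x ux d
            = fderiv ℝ φ x (ΓM x ux d) - ΓN (φ x) (fderiv ℝ φ x ux) (fderiv ℝ φ x d) := by
          linear_combination (norm := abel) h0
        rw [d2_symm hφ x d ux, h1, hP4w, hΓM.2.1 x ux d]
        rw [(hΓN.1.1 (φ x) (fderiv ℝ φ x d)).map_smul]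
      -- piece 1 : gN (dφ (U' d)) w'
      have hpiece1 : gN (φ x) (fderiv ℝ φ x (U' d)) w'
          = - gM x (ΓM x d ux) h' + lamf x * gN (φ x) (ΓN (φ x) (fderiv ℝ φ x d) w) w' := by
        have e1 : gN (φ x) (fderiv ℝ φ x (U' d)) w' = gM x (U' d) h' := by
          rw [hgN.gsymm, ← hsp' (U' d), hgM.gsymm]
        rw [e1, hD1 h' d]
        -- rewrite the last term using hD2h'
        rw [hD2h']
        rw [hgN.gsubR, hgN.gsmulR]
        rw [← hspw (ΓM x d h')]
        -- rewrite dφ h' = lam • w'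
        rw [hP4', hgN.gsmulR]
        rw [(hΓN.1.2.1 (φ x) (fderiv ℝ φ x d)).map_smul, hgN.gsmulR]
        -- ΓN symmetry to cancel
        rw [hΓN.2.1 (φ x) w' (fderiv ℝ φ x d)]
        ring
      -- piece 2 : gN (D2 d ux) w'
      have hpiece2 : gN (φ x) (fderiv ℝ (fderiv ℝ φ) x d ux) w'
          = gM x (ΓM x d ux) h' - lamf x * gN (φ x) (ΓN (φ x) (fderiv ℝ φ x d) w) w' := by
        rw [hD2ux, hgN.gsubL, hgN.gsmulL]
        have e2 : gN (φ x) (fderiv ℝ φ x (ΓM x d ux)) w' = gM x (ΓM x d ux) h' := by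
          rw [hgN.gsymm, ← hsp' (ΓM x d ux), hgM.gsymm]
        rw [e2]
        try rw [hΓN.2.1 (φ x) w (fderiv ℝ φ x d)]
        try ring
      rw [hgN.gaddL, hpiece1, hpiece2]
      ring
    have := hKey (fderiv ℝ φ x (U' d)
      + fderiv ℝ (fderiv ℝ φ) x d (dstar hgM hgN φ x w))
    exact (hgN.pb (φ x)).eq_zero_of_self _ this
  intro x y
  have hconst := is_const_of_fderiv_eq_zero hdiff hzero x y
  have hx := hval x
  have hy := hval y
  rw [hconst] at hx
  rw [hy] at hx
  -- lamf y • w = lamf x • w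
  have : (lamf x - lamf y) • w = 0 := by
    rw [sub_smul, hx, sub_self]
  rcases smul_eq_zero.mp this with h | h
  · linarith [sub_eq_zero.mp (by linarith : lamf x - lamf y = 0)]
  · exact absurd h hw

end LamConst

section Integrab

variable [FiniteDimensional ℝ E] [FiniteDimensional ℝ F]
variable {gM : E → E → E → ℝ} {gN : F → F → F → ℝ}
variable {ΓM : E → E → E → E} {ΓN : F → F → F → F}
variable {φ : E → F}

lemma bracket_horiz (hgM : IsMetric gM) (hgN : IsMetric gN)
    (hΓM : IsLeviCivita gM ΓM) (hΓN : IsLeviCivita gN ΓN)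
    (hφ : ContDiff ℝ (⊤ : ℕ∞) φ) {lam : ℝ} (hlampos : 0 < lam)
    (hconf : ∀ y, ∀ X ∈ Hor gM φ y, ∀ Y ∈ Hor gM φ y,
      gN (φ y) (fderiv ℝ φ y X) (fderiv ℝ φ y Y) = lam * gM y X Y)
    (hsffH : ∀ y ξ X, X ∈ Hor gM φ y → sff ΓM ΓN φ y X ξ = 0)
    {X Y : E → E} (hX : Differentiable ℝ X) (hY : Differentiable ℝ Y)
    (hXh : ∀ y, X y ∈ Hor gM φ y) (hYh : ∀ y, Y y ∈ Hor gM φ y) (x : E) :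
    (fderiv ℝ Y x (X x) - fderiv ℝ X x (Y x)) ∈ Hor gM φ x := by
  intro Z hZ
  have key : ∀ (W : E → E), Differentiable ℝ W → (∀ y, W y ∈ Hor gM φ y) →
      ∀ d, d ∈ Hor gM φ x →
      gM x (fderiv ℝ W x d) Z = - gM x (ΓM x d (W x)) Z := by
    intro W hW hWh d hd
    have hfun : (fun y => gM y (W y) Z)
        = (fun y => lam⁻¹ * gN (φ y) (fderiv ℝ φ y (W y)) (fderiv ℝ φ y Z)) := by
      funext y
      rw [conf_all hgM (hconf y) hgN (W y) (hWh y) Z]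
      field_simp
    have hL := hgM.fderiv_g3 (hasFDerivAt_id x) (hW x).hasFDerivAt (hasFDerivAt_const Z x)
    have hA : HasFDerivAt (fun y => fderiv ℝ φ y (W y))
        ((fderiv ℝ φ x).comp (fderiv ℝ W x) + (fderiv ℝ (fderiv ℝ φ) x).flip (W x)) x :=
      HasFDerivAt.clm_apply (psi_hasFDerivAt hφ x) (hW x).hasFDerivAt
    have hB := hasFDerivAt_dphi_apply hφ x Z
    have hR0 := hgN.fderiv_g3 (phi_hasFDerivAt hφ x) hA hB
    simp only [id_eq, ContinuousLinearMap.id_apply, ContinuousLinearMap.zero_apply,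
      ContinuousLinearMap.flip_apply] at hL hR0
    have hEq : fderiv ℝ (fun y => gM y (W y) Z) x d
        = fderiv ℝ (fun y => lam⁻¹ * gN (φ y) (fderiv ℝ φ y (W y)) (fderiv ℝ φ y Z)) x d := by
      rw [hfun]
    have hconstmul : fderiv ℝ (fun y => lam⁻¹ *
        gN (φ y) (fderiv ℝ φ y (W y)) (fderiv ℝ φ y Z)) x d
        = lam⁻¹ * fderiv ℝ (fun y =>
            gN (φ y) (fderiv ℝ φ y (W y)) (fderiv ℝ φ y Z)) x d := by
      rw [fderiv_const_mul hR0.1]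
      rfl
    rw [hconstmul, hL.2 d, hR0.2 d] at hEq
    rw [hgM.gzR, add_zero] at hEq
    rw [hΓM.2.2 x (W x) Z d] at hEq
    -- kill the terms containing `fderiv φ x Z = 0`
    rw [hZ] at hEq
    have hLC1 : fderiv ℝ (fun pp => gN pp (fderiv ℝ φ x (W x)) (0 : F)) (φ x)
        (fderiv ℝ φ x d) = 0 := by
      rw [hΓN.2.2 (φ x) (fderiv ℝ φ x (W x)) (0 : F) (fderiv ℝ φ x d)]
      rw [hgN.gzR, (hΓN.1.2.1 (φ x) (fderiv ℝ φ x d)).map_zero, hgN.gzR]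
      ring
    rw [hLC1, hgN.gzR] at hEq
    -- remaining gN term
    have hD2 : fderiv ℝ (fderiv ℝ φ) x d Z = fderiv ℝ φ x (ΓM x d Z) := by
      have h0 := hsffH x Z d hd
      rw [sff_eq hφ, hZ, (hΓN.1.2.1 (φ x) (fderiv ℝ φ x d)).map_zero] at h0
      linear_combination (norm := abel) h0
    rw [hD2] at hEq
    have hcf : gN (φ x) (fderiv ℝ φ x (W x)) (fderiv ℝ φ x (ΓM x d Z))
        = lam * gM x (W x) (ΓM x d Z) :=
      conf_all hgM (hconf x) hgN (W x) (hWh x) (ΓM x d Z)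
    rw [hcf] at hEq
    have hlamne : lam ≠ 0 := ne_of_gt hlampos
    field_simp at hEq
    have h' : (gM x (ΓM x d (W x)) Z + gM x ((fderiv ℝ W x) d) Z) * lam = 0 := by
      linear_combination hEq
    rcases mul_eq_zero.mp h' with h | h
    · linarith
    · exact absurd h hlamne
  have h1 := key Y hY hYh (X x) (hXh x)
  have h2 := key X hX hXh (Y x) (hYh x)
  rw [hgM.gsubL, h1, h2, hΓM.2.1 x (X x) (Y x)]
  ring

end Integrab
/-- Lemma 7. Assume `dim N ≥ 2` and `Φ = φ_* : TM → TN` is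
horizontally conformal with dilatation `Λ` with respect to Cheeger–Gromoll type metrics
`h_{p,q,α}`, `h_{r,s,β}`. Then `φ` is horizontally conformal with constant dilatation
`λ = Λ(0)`, `Λ` is constant (equal to `λ`), and the horizontal distribution `H^φ` is
integrable. -/
theorem stmt14
    (gM : E → E → E → ℝ) (gN : F → F → F → ℝ)
    (ΓM : E → E → E → E) (ΓN : F → F → F → F)
    (hgM : IsMetric gM) (hgN : IsMetric gN)
    (hΓM : IsLeviCivita gM ΓM) (hΓN : IsLeviCivita gN ΓN)
    (φ : E → F) (hφ : ContDiff ℝ (⊤ : ℕ∞) φ)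
    (hsub : ∀ y, Surjective (fderiv ℝ φ y))
    [FiniteDimensional ℝ E] [FiniteDimensional ℝ F]
    (hdim : Module.finrank ℝ F < Module.finrank ℝ E)
    (hdimN : 2 ≤ Module.finrank ℝ F)
    (p q α r s β : ℝ) (hq : 0 ≤ q) (hs : 0 ≤ s) (hα : 0 < α) (hβ : 0 < β)
    (Lam : E × E → ℝ)
    (hHCT : HCSubT gM ΓM p q α gN ΓN r s β φ Lam) :
    ∃ lam : ℝ,
      (∀ x : E, Lam (x, 0) = lam) ∧
      HCSub gM gN φ (fun _ => lam) ∧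
      (∀ z : E × E, Lam z = lam) ∧
      (∀ (X Y : E → E), Differentiable ℝ X → Differentiable ℝ Y →
        (∀ y, X y ∈ Hor gM φ y) → (∀ y, Y y ∈ Hor gM φ y) →
        ∀ x, (fderiv ℝ Y x (X x) - fderiv ℝ X x (Y x)) ∈ Hor gM φ x) := by
  classical
  have hF : 0 < Module.finrank ℝ F := by omega
  have hcore := fun x ξ => corePointwise hgM hgN hΓM.1 hΓN.1 hφ hsub hF hq hs hα hβ hHCT x ξ
  have hconf0 : ∀ x, ∀ X ∈ Hor gM φ x, ∀ Y ∈ Hor gM φ x,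
      gN (φ x) (fderiv ℝ φ x X) (fderiv ℝ φ x Y) = Lam (x, 0) * gM x X Y :=
    conf0 hgM hgN hΓM.1 hΓN.1 hφ hHCT
  have hsffH : ∀ y ξ X, X ∈ Hor gM φ y → sff ΓM ΓN φ y X ξ = 0 :=
    fun y ξ X hX => (hcore y ξ).2 X hX
  have hlamconst : ∀ x y : E, Lam (x, 0) = Lam (y, 0) :=
    lam_const hgM hgN hΓM hΓN hφ hsub hF hconf0 hsffH
  have hlam00 : ∀ x : E, Lam (x, 0) = Lam ((0:E), (0:E)) := fun x => hlamconst x 0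
  refine ⟨Lam ((0:E), (0:E)), ?_, ?_, ?_, ?_⟩
  · intro x; exact hlam00 x
  · refine ⟨hsub, fun _ => hHCT.2.1 ((0:E), (0:E)), ?_⟩
    intro x X hX Y hY
    rw [hconf0 x X hX Y hY, hlam00 x]
  · intro z
    have h1 : Lam (z.1, z.2) = Lam (z.1, 0) := (hcore z.1 z.2).1
    rw [Prod.mk.eta] at h1
    rw [h1]; exact hlam00 z.1
  · intro X Y hX hY hXh hYh x
    have hconf' : ∀ y, ∀ A ∈ Hor gM φ y, ∀ B ∈ Hor gM φ y,
        gN (φ y) (fderiv ℝ φ y A) (fderiv ℝ φ y B) = Lam ((0:E), (0:E)) * gM y A B := by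
      intro y A hA B hB
      rw [hconf0 y A hA B hB, hlam00 y]
    exact bracket_horiz hgM hgN hΓM hΓN hφ (hHCT.2.1 ((0:E), (0:E))) hconf' hsffH
      hX hY hXh hYh x
end
end

section
/- Let φ : M → N be a horizontally conformal submersion between Riemannian manifolds with dilatation λ, dim M = m, dim N = n. Then the tension field of φ satisfies τ(φ) = −((n−2)/2) φ_*(grad(ln λ)) − (m−n) φ_*(κ_φ), where κ_φ = (1/(m−n)) Σᵢ (∇^M_{eᵢ}eᵢ)^⊥ is the mean curvature vector field of the fibres, (eᵢ) an orthonormal frame of V^φ = ker φ_* and ⊥ the projection onto H^φ. -/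
open Function
open scoped BigOperators

noncomputable section

variable {E : Type*} [NormedAddCommGroup E] [NormedSpace ℝ E]
variable {F : Type*} [NormedAddCommGroup F] [NormedSpace ℝ F]

noncomputable section

/-- A copy of `E` used to install the inner product given by a metric at a point. -/
def GS (E : Type*) : Type _ := E

instance {E : Type*} [AddCommGroup E] : AddCommGroup (GS E) := ‹AddCommGroup E›
instance {E : Type*} [AddCommGroup E] [Module ℝ E] : Module ℝ (GS E) := ‹Module ℝ E›
instance {E : Type*} [AddCommGroup E] [Module ℝ E] [Module.Finite ℝ E] :
    Module.Finite ℝ (GS E) := ‹Module.Finite ℝ E›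

theorem lin_comb {P : Type*} [AddCommGroup P] [Module ℝ P]
    {f : P → ℝ} (hL : IsLinearMap ℝ f) {ι : Type*} (s : Finset ι)
    (c : ι → ℝ) (u : ι → P) :
    f (∑ i ∈ s, c i • u i) = ∑ i ∈ s, c i * f (u i) := by
  classical
  induction s using Finset.induction with
  | empty => simpa using hL.map_zero
  | insert _ _ h ih =>
      rw [Finset.sum_insert h, Finset.sum_insert h, hL.map_add, hL.map_smul, ih,
        smul_eq_mul]

theorem lin_combF {P G : Type*} [AddCommGroup P] [Module ℝ P]
    [AddCommGroup G] [Module ℝ G]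
    {f : P → G} (hL : IsLinearMap ℝ f) {ι : Type*} (s : Finset ι)
    (c : ι → ℝ) (u : ι → P) :
    f (∑ i ∈ s, c i • u i) = ∑ i ∈ s, c i • f (u i) := by
  classical
  induction s using Finset.induction with
  | empty => simpa using hL.map_zero
  | insert _ _ h ih =>
      rw [Finset.sum_insert h, Finset.sum_insert h, hL.map_add, hL.map_smul, ih]

/-- Expansion of a pointwise bilinear form in a basis. -/
theorem bilin_expand {P : Type*} [AddCommGroup P] [Module ℝ P]
    (g2 : P → P → ℝ)
    (hl1 : ∀ w, IsLinearMap ℝ fun u => g2 u w)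
    (hl2 : ∀ u, IsLinearMap ℝ fun w => g2 u w)
    {ι : Type*} [Fintype ι] (b : Module.Basis ι ℝ P) (z w : P) :
    g2 z w = ∑ i, ∑ j, b.repr z i * b.repr w j * g2 (b i) (b j) := by
  conv_lhs => rw [← b.sum_repr z]
  rw [lin_comb (hl1 w)]
  refine Finset.sum_congr rfl fun i _ => ?_
  conv_lhs => rw [← b.sum_repr w, lin_comb (hl2 (b i))]
  rw [Finset.mul_sum]
  exact Finset.sum_congr rfl fun j _ => by ring

section p2

/-- Expansion of a vector in an orthonormal spanning family. -/
theorem ON_expansion (g2 : E → E → ℝ)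
    (hsym : ∀ u w, g2 u w = g2 w u)
    (hpos : ∀ u, u ≠ 0 → 0 < g2 u u)
    (hlin : ∀ w, IsLinearMap ℝ fun u => g2 u w)
    {ι : Type*} [Fintype ι] [DecidableEq ι] (f : ι → E)
    (hON : ∀ i j, g2 (f i) (f j) = if i = j then 1 else 0)
    (hspan : Submodule.span ℝ (Set.range f) = ⊤) (u : E) :
    u = ∑ i, g2 u (f i) • f i := by
  set w := u - ∑ i, g2 u (f i) • f i with hw
  have hwf : ∀ j, g2 w (f j) = 0 := by
    intro j
    have hsub : g2 w (f j)
        = g2 u (f j) - g2 (∑ i, g2 u (f i) • f i) (f j) := by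
      simpa using (hlin (f j)).map_sub u (∑ i, g2 u (f i) • f i)
    rw [hsub, lin_comb (hlin (f j))]
    have : ∀ i, g2 u (f i) * g2 (f i) (f j)
        = if i = j then g2 u (f j) else 0 := by
      intro i; rw [hON i j]; by_cases h : i = j <;> simp [h]
    rw [Finset.sum_congr rfl fun i _ => this i]
    simp
  have hwz : ∀ z, g2 w z = 0 := by
    intro z
    have hz : z ∈ Submodule.span ℝ (Set.range f) := by rw [hspan]; trivial
    induction hz using Submodule.span_induction with
    | mem z hz => obtain ⟨j, rfl⟩ := hz; exact hwf j
    | zero =>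
        have h0 : g2 (0 : E) w = 0 := by
          simpa using (hlin w).map_smul 0 0
        rw [hsym]; exact h0
    | add a b _ _ ha hb =>
        rw [hsym, (hlin w).map_add, hsym a w, hsym b w, ha, hb, add_zero]
    | smul c a _ ha =>
        rw [hsym, (hlin w).map_smul, hsym a w, ha, smul_zero]
  have hw0 : w = 0 := by
    by_contra h
    exact absurd (hwz w) (ne_of_gt (hpos w h))
  have := sub_eq_zero.mp (by simpa [hw] using hw0)
  exact this

/-- Basis-independence of the trace of a bilinear map w.r.t. orthonormal frames. -/
theorem trace_indep (g2 : E → E → ℝ)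
    (hsym : ∀ u w, g2 u w = g2 w u)
    (hpos : ∀ u, u ≠ 0 → 0 < g2 u u)
    (hlin : ∀ w, IsLinearMap ℝ fun u => g2 u w)
    {ι κ : Type*} [Fintype ι] [Fintype κ] [DecidableEq ι] [DecidableEq κ]
    (e : ι → E) (f : κ → E)
    (heON : ∀ i j, g2 (e i) (e j) = if i = j then 1 else 0)
    (hespan : Submodule.span ℝ (Set.range e) = ⊤)
    (hfON : ∀ i j, g2 (f i) (f j) = if i = j then 1 else 0)
    (hfspan : Submodule.span ℝ (Set.range f) = ⊤)
    (B : E →ₗ[ℝ] E →ₗ[ℝ] F) :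
    ∑ i, B (e i) (e i) = ∑ k, B (f k) (f k) := by
  have expe := ON_expansion g2 hsym hpos hlin e heON hespan
  have expf := ON_expansion g2 hsym hpos hlin f hfON hfspan
  have key : ∀ u w, B u w = ∑ k, g2 u (f k) • B (f k) w := by
    intro u w
    conv_lhs => rw [expf u]
    rw [map_sum]
    simp
  calc ∑ i, B (e i) (e i)
      = ∑ i, ∑ k, g2 (e i) (f k) • B (f k) (e i) := by
        exact Finset.sum_congr rfl fun i _ => key (e i) (e i)
    _ = ∑ k, ∑ i, g2 (e i) (f k) • B (f k) (e i) := Finset.sum_comm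
    _ = ∑ k, B (f k) (f k) := by
        refine Finset.sum_congr rfl fun k _ => ?_
        have : ∑ i, g2 (e i) (f k) • B (f k) (e i)
            = B (f k) (∑ i, g2 (f k) (e i) • e i) := by
          rw [map_sum]
          exact Finset.sum_congr rfl fun i _ => by rw [hsym, map_smul]
        rw [this, ← expe (f k)]
end p2

section p3

/-- Extension of an orthonormal family of vectors to an adapted orthonormal frame:
the new vectors are orthogonal to the span of the old ones. -/
theorem exists_adapted_frame [FiniteDimensional ℝ E]
    (g2 : E → E → ℝ)
    (hsym : ∀ u w, g2 u w = g2 w u)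
    (hpos : ∀ u, u ≠ 0 → 0 < g2 u u)
    (hlin : ∀ w, IsLinearMap ℝ fun u => g2 u w)
    {k : ℕ} (v : Fin k → E)
    (hvON : ∀ i j, g2 (v i) (v j) = if i = j then 1 else 0) :
    ∃ w : Fin (Module.finrank ℝ E - k) → E,
      (∀ a z, z ∈ Submodule.span ℝ (Set.range v) → g2 (w a) z = 0) ∧
      (∀ i j, g2 (Sum.elim v w i) (Sum.elim v w j)
          = if i = j then 1 else 0) ∧
      Submodule.span ℝ (Set.range (Sum.elim v w)) = ⊤ := by
  classical
  letI core : InnerProductSpace.Core ℝ (GS E) :=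
    { inner := fun u w => g2 u w
      conj_inner_symm := fun u w => by simpa using (hsym w u)
      re_inner_nonneg := fun u => by
        by_cases h : u = 0
        · subst h
          have h0 : g2 (0 : E) (0 : E) = 0 := by
            simpa using (hlin 0).map_smul 0 0
          simp [inner, h0]
          exact le_of_eq h0.symm
        · simpa using (le_of_lt (hpos u h))
      add_left := fun u v w => (hlin w).map_add u v
      smul_left := fun u v r => by rw [conj_trivial]; exact (hlin v).map_smul r u
      definite := fun u h => by
        by_contra hu
        exact absurd h (ne_of_gt (hpos u hu)) }
  letI : NormedAddCommGroup (GS E) := core.toNormedAddCommGroup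
  letI : InnerProductSpace ℝ (GS E) := InnerProductSpace.ofCore core.toCore
  haveI : FiniteDimensional ℝ (GS E) := ‹FiniteDimensional ℝ E›
  have hinner : ∀ u w : GS E, (inner ℝ u w : ℝ) = g2 u w := fun _ _ => rfl
  let v' : Fin k → GS E := v
  have hv'ON : Orthonormal ℝ v' := by
    rw [orthonormal_iff_ite]
    intro i j
    rw [hinner]
    exact hvON i j
  set V : Submodule ℝ (GS E) := Submodule.span ℝ (Set.range v') with hV
  have hVrank : Module.finrank ℝ V = k := by
    rw [hV, finrank_span_eq_card hv'ON.linearIndependent, Fintype.card_fin]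
  have hfr : Module.finrank ℝ (GS E) = Module.finrank ℝ E := rfl
  have hrank : Module.finrank ℝ Vᗮ = Module.finrank ℝ E - k := by
    have := Submodule.finrank_add_finrank_orthogonal V
    omega
  set OB := stdOrthonormalBasis ℝ (Vᗮ : Submodule ℝ (GS E)) with hOB
  set ι : Fin (Module.finrank ℝ E - k) ≃ Fin (Module.finrank ℝ Vᗮ) :=
    (finCongr hrank.symm : _ ≃ _) with hι
  set w : Fin (Module.finrank ℝ E - k) → E :=
    fun a => ((OB (ι a) : Vᗮ) : GS E) with hwdef
  have hwV : ∀ a, ∀ z : GS E, z ∈ V → g2 (w a) z = 0 := by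
    intro a z hz
    have hmem : ((OB (ι a) : Vᗮ) : GS E) ∈ Vᗮ := (OB (ι a)).2
    have h := (Submodule.mem_orthogonal V _).mp hmem z hz
    have h2 : g2 z (w a) = 0 := by rw [← hinner z (w a)]; exact h
    exact (hsym (w a) z).trans h2
  refine ⟨w, ?_, ?_, ?_⟩
  · intro a z hz
    exact hwV a z hz
  · intro i j
    rcases i with i | i <;> rcases j with j | j
    · simpa [Sum.inl.injEq] using hvON i j
    · simp only [Sum.elim_inl, Sum.elim_inr]
      have hm : (v i : GS E) ∈ V := Submodule.subset_span ⟨i, rfl⟩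
      rw [hsym, hwV j _ hm]
      simp
    · simp only [Sum.elim_inl, Sum.elim_inr]
      have hm : (v j : GS E) ∈ V := Submodule.subset_span ⟨j, rfl⟩
      rw [hwV i _ hm]
      simp
    · simp only [Sum.elim_inr]
      have hob := OB.orthonormal
      rw [orthonormal_iff_ite] at hob
      have h2 : g2 (w i) (w j) = (inner ℝ (OB (ι i)) (OB (ι j)) : ℝ) := rfl
      rw [h2, hob]
      by_cases h : i = j
      · simp [h]
      · have : ¬ (ι i = ι j) := fun hc => h (ι.injective hc)
        simp [h, this]
  · have hr : Set.range (Sum.elim v' w) = Set.range v' ∪ Set.range w :=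
      Set.Sum.elim_range v' w
    set w' : Fin (Module.finrank ℝ E - k) → GS E :=
      fun a => ((OB (ι a) : Vᗮ) : GS E) with hw'def
    have hws : Submodule.span ℝ (Set.range w') = (Vᗮ : Submodule ℝ (GS E)) := by
      have h1 : Set.range w' = (Vᗮ.subtype) '' Set.range (fun a => OB (ι a)) := by
        rw [← Set.range_comp]
        rfl
      have h2 : Set.range (fun a => OB (ι a)) = Set.range OB :=
        Function.Surjective.range_comp (finCongr hrank.symm).surjective OB
      have h3 : Submodule.span ℝ (Set.range OB) = (⊤ : Submodule ℝ Vᗮ) := by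
        have := OB.toBasis.span_eq
        rwa [OB.coe_toBasis] at this
      rw [h1, h2, Submodule.span_image, h3, Submodule.map_top,
        Submodule.range_subtype]
    have hr' : Set.range (Sum.elim v' w') = Set.range v' ∪ Set.range w' :=
      Set.Sum.elim_range v' w'
    show Submodule.span ℝ (Set.range (Sum.elim v' w')) = ⊤
    rw [hr', Submodule.span_union, hws, ← hV]
    exact Submodule.sup_orthogonal_of_hasOrthogonalProjection
end p3

section p4

/-- A function differentiable at a point admits a local linear growth bound. -/
theorem loc_lip {G : Type*} [NormedAddCommGroup G] [NormedSpace ℝ G]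
    {f : E → G} {x : E} (hf : DifferentiableAt ℝ f x) :
    ∃ C, ∀ᶠ y in nhds x, ‖f y - f x‖ ≤ C * ‖y - x‖ := by
  obtain ⟨c, hc⟩ := hf.hasFDerivAt.isBigO_sub.bound
  exact ⟨c, hc⟩

/-- Local uniform Lipschitz-type bound for a smooth family of bilinear forms. -/
theorem bilin_eventual_bound [FiniteDimensional ℝ E]
    (g : E → E → E → ℝ)
    (hlin : ∀ y w, IsLinearMap ℝ fun u => g y u w)
    (hlin2 : ∀ y u, IsLinearMap ℝ fun w => g y u w)
    (hcd : ∀ u w, ContDiff ℝ (⊤ : ℕ∞) fun y => g y u w) (x : E) :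
    ∃ C, ∀ᶠ y in nhds x, ∀ z w,
      |g y z w - g x z w| ≤ C * ‖y - x‖ * ‖z‖ * ‖w‖ := by
  classical
  set b := Module.finBasis ℝ E with hb
  set co : Fin (Module.finrank ℝ E) → E →L[ℝ] ℝ :=
    fun i => LinearMap.toContinuousLinearMap (b.coord i) with hco
  set K : ℝ := ∑ i, ‖co i‖ with hK
  have hKi : ∀ (i) (z : E), |b.repr z i| ≤ K * ‖z‖ := by
    intro i z
    have h1 : |b.repr z i| ≤ ‖co i‖ * ‖z‖ := by
      simpa [hco, Real.norm_eq_abs] using (co i).le_opNorm z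
    refine h1.trans (mul_le_mul_of_nonneg_right ?_ (norm_nonneg z))
    exact Finset.single_le_sum (f := fun i => ‖co i‖)
      (fun _ _ => norm_nonneg _) (Finset.mem_univ i)
  have hC : ∀ i j, ∃ C, 0 ≤ C ∧ ∀ᶠ y in nhds x,
      |g y (b i) (b j) - g x (b i) (b j)| ≤ C * ‖y - x‖ := by
    intro i j
    obtain ⟨C, hC⟩ := loc_lip (f := fun y => g y (b i) (b j))
      (((hcd (b i) (b j)).differentiable (by simp)).differentiableAt)
    refine ⟨max C 0, le_max_right _ _, ?_⟩
    filter_upwards [hC] with y hy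
    calc |g y (b i) (b j) - g x (b i) (b j)| ≤ C * ‖y - x‖ := by
          simpa [Real.norm_eq_abs] using hy
      _ ≤ max C 0 * ‖y - x‖ :=
          mul_le_mul_of_nonneg_right (le_max_left _ _) (norm_nonneg _)
  choose C hC0 hCev using hC
  refine ⟨K * K * ∑ i, ∑ j, C i j, ?_⟩
  have hall : ∀ᶠ y in nhds x, ∀ i j,
      |g y (b i) (b j) - g x (b i) (b j)| ≤ C i j * ‖y - x‖ :=
    Filter.eventually_all.2 fun i => Filter.eventually_all.2 fun j => hCev i j
  filter_upwards [hall] with y hy z w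
  have hexp : ∀ y', g y' z w
      = ∑ i, ∑ j, b.repr z i * b.repr w j * g y' (b i) (b j) :=
    fun y' => bilin_expand (g y') (hlin y') (hlin2 y') b z w
  have hdiff : g y z w - g x z w
      = ∑ i, ∑ j, b.repr z i * b.repr w j
          * (g y (b i) (b j) - g x (b i) (b j)) := by
    rw [hexp y, hexp x, ← Finset.sum_sub_distrib]
    refine Finset.sum_congr rfl fun i _ => ?_
    rw [← Finset.sum_sub_distrib]
    exact Finset.sum_congr rfl fun j _ => by ring
  rw [hdiff]
  calc |∑ i, ∑ j, b.repr z i * b.repr w j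
          * (g y (b i) (b j) - g x (b i) (b j))|
      ≤ ∑ i, ∑ j, |b.repr z i| * |b.repr w j|
          * |g y (b i) (b j) - g x (b i) (b j)| := by
        refine (Finset.abs_sum_le_sum_abs _ _).trans ?_
        refine Finset.sum_le_sum fun i _ => ?_
        refine (Finset.abs_sum_le_sum_abs _ _).trans ?_
        refine Finset.sum_le_sum fun j _ => ?_
        rw [abs_mul, abs_mul]
    _ ≤ ∑ i, ∑ j, (K * ‖z‖) * (K * ‖w‖) * (C i j * ‖y - x‖) := by
        refine Finset.sum_le_sum fun i _ => Finset.sum_le_sum fun j _ => ?_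
        have h1 := hKi i z
        have h2 := hKi j w
        have h3 := hy i j
        have hb1 : (0:ℝ) ≤ |b.repr z i| := abs_nonneg _
        have hb2 : (0:ℝ) ≤ |b.repr w j| := abs_nonneg _
        have hb3 : (0:ℝ) ≤ |g y (b i) (b j) - g x (b i) (b j)| := abs_nonneg _
        have hk1 : (0:ℝ) ≤ K * ‖z‖ := le_trans hb1 h1
        have hk2 : (0:ℝ) ≤ K * ‖w‖ := le_trans hb2 h2
        exact mul_le_mul (mul_le_mul h1 h2 hb2 hk1) h3 hb3 (mul_nonneg hk1 hk2)
    _ = K * K * (∑ i, ∑ j, C i j) * ‖y - x‖ * ‖z‖ * ‖w‖ := by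
        have h1 : ∀ i : Fin (Module.finrank ℝ E),
            ∑ j, (K * ‖z‖) * (K * ‖w‖) * (C i j * ‖y - x‖)
            = (K * ‖z‖) * (K * ‖w‖) * ‖y - x‖ * ∑ j, C i j := by
          intro i
          rw [Finset.mul_sum]
          exact Finset.sum_congr rfl fun j _ => by ring
        rw [Finset.sum_congr rfl fun i _ => h1 i, ← Finset.mul_sum]
        ring

/-- Uniform coercivity of a positive definite bilinear form (finite dimensions). -/
theorem posdef_coercive [FiniteDimensional ℝ E] [Nontrivial E]
    (g2 : E → E → ℝ)
    (hsym : ∀ u w, g2 u w = g2 w u)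
    (hpos : ∀ u, u ≠ 0 → 0 < g2 u u)
    (hlin : ∀ w, IsLinearMap ℝ fun u => g2 u w) :
    ∃ c > 0, ∀ w, c * (‖w‖ * ‖w‖) ≤ g2 w w := by
  classical
  have hlin2 : ∀ u, IsLinearMap ℝ fun w => g2 u w := by
    intro u
    exact ⟨fun a b => by rw [hsym, (hlin u).map_add, hsym a u, hsym b u],
      fun c a => by rw [hsym, (hlin u).map_smul, hsym a u]⟩
  set b := Module.finBasis ℝ E with hb
  have hrepr : ∀ w, g2 w w
      = ∑ i, ∑ j, b.repr w i * b.repr w j * g2 (b i) (b j) :=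
    fun w => bilin_expand g2 hlin hlin2 b w w
  have hcont : Continuous fun w : E => g2 w w := by
    have : (fun w : E => g2 w w)
        = fun w => ∑ i, ∑ j, (LinearMap.toContinuousLinearMap (b.coord i)) w
            * (LinearMap.toContinuousLinearMap (b.coord j)) w
            * g2 (b i) (b j) := by
      funext w
      simpa using hrepr w
    rw [this]
    refine continuous_finset_sum _ fun i _ => continuous_finset_sum _ fun j _ => ?_
    exact (((LinearMap.toContinuousLinearMap (b.coord i)).continuous.mul
      (LinearMap.toContinuousLinearMap (b.coord j)).continuous).mul
        continuous_const)
  have hcpt : IsCompact (Metric.sphere (0 : E) 1) := isCompact_sphere 0 1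
  have hne : (Metric.sphere (0 : E) 1).Nonempty := by
    obtain ⟨w, hw⟩ := exists_norm_eq E (le_of_lt one_pos)
    exact ⟨w, by simpa using hw⟩
  obtain ⟨u0, hu0mem, hu0min⟩ :=
    hcpt.exists_isMinOn hne (hcont.continuousOn)
  have hu0 : ‖u0‖ = 1 := by simpa using hu0mem
  set c := g2 u0 u0 with hc
  have hcpos : 0 < c := hpos u0 (by intro h; rw [h] at hu0; simp at hu0)
  refine ⟨c, hcpos, ?_⟩
  intro w
  by_cases hw : w = 0
  · have h0 : g2 (0:E) (0:E) = 0 := by simpa using (hlin 0).map_smul 0 0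
    simp [hw, h0]
  · set t := ‖w‖ with ht
    have htpos : 0 < t := norm_pos_iff.mpr hw
    set u := t⁻¹ • w with hu
    have humem : u ∈ Metric.sphere (0 : E) 1 := by
      have h1 : ‖u‖ = 1 := by
        rw [hu, norm_smul, norm_inv, norm_norm]
        exact inv_mul_cancel₀ (ne_of_gt htpos)
      exact mem_sphere_zero_iff_norm.mpr h1
    have hmin := hu0min humem
    have hexp : g2 w w = t * (t * g2 u u) := by
      have hwu : w = t • u := by
        rw [hu, smul_smul, mul_inv_cancel₀ (ne_of_gt htpos), one_smul]
      rw [hwu, (hlin (t • u)).map_smul, smul_eq_mul]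
      congr 1
      rw [hsym, (hlin u).map_smul, smul_eq_mul, hsym u]
    rw [hexp]
    have : c ≤ g2 u u := hmin
    calc c * (t * t) ≤ g2 u u * (t * t) := by
          exact mul_le_mul_of_nonneg_right this (by positivity)
    _ = t * (t * g2 u u) := by ring
end p4

section p5

/-- Chain rule for a smooth family of bilinear forms along a map, with varying
vector arguments. -/
theorem CR [FiniteDimensional ℝ F]
    (g : F → F → F → ℝ)
    (hlin : ∀ z w, IsLinearMap ℝ fun u => g z u w)
    (hlin2 : ∀ z u, IsLinearMap ℝ fun w => g z u w)
    (hcd : ∀ u w, ContDiff ℝ (⊤ : ℕ∞) fun z => g z u w)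
    {f A B : E → F} {x : E} {f' A' B' : E →L[ℝ] F}
    (hf : HasFDerivAt f f' x) (hA : HasFDerivAt A A' x)
    (hB : HasFDerivAt B B' x) :
    ∃ D : E →L[ℝ] ℝ, HasFDerivAt (fun y => g (f y) (A y) (B y)) D x ∧
      ∀ u, D u = fderiv ℝ (fun z => g z (A x) (B x)) (f x) (f' u)
        + g (f x) (A' u) (B x) + g (f x) (A x) (B' u) := by
  classical
  set c := Module.finBasis ℝ F with hc
  set co : Fin (Module.finrank ℝ F) → F →L[ℝ] ℝ :=
    fun i => LinearMap.toContinuousLinearMap (c.coord i) with hco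
  have hcoapp : ∀ i z, co i z = c.repr z i := fun i z => rfl
  set G : Fin (Module.finrank ℝ F) → Fin (Module.finrank ℝ F) → F → ℝ :=
    fun i j z => g z (c i) (c j) with hG
  have hGd : ∀ i j, DifferentiableAt ℝ (G i j) (f x) :=
    fun i j => ((hcd (c i) (c j)).differentiable (by simp)).differentiableAt
  -- derivative pieces
  have hrA : ∀ i, HasFDerivAt (fun y => co i (A y)) ((co i).comp A') x :=
    fun i => (co i).hasFDerivAt.comp x hA
  have hrB : ∀ j, HasFDerivAt (fun y => co j (B y)) ((co j).comp B') x :=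
    fun j => (co j).hasFDerivAt.comp x hB
  have hGf : ∀ i j, HasFDerivAt (fun y => G i j (f y))
      ((fderiv ℝ (G i j) (f x)).comp f') x :=
    fun i j => ((hGd i j).hasFDerivAt).comp x hf
  have hterm : ∀ i j, HasFDerivAt
      (fun y => co i (A y) * co j (B y) * G i j (f y))
      ((co i (A x) * co j (B x)) • ((fderiv ℝ (G i j) (f x)).comp f')
        + G i j (f x) • (co i (A x) • (co j).comp B'
            + co j (B x) • (co i).comp A')) x :=
    fun i j => ((hrA i).mul (hrB j)).mul (hGf i j)
  set D : E →L[ℝ] ℝ := ∑ i, ∑ j,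
      ((co i (A x) * co j (B x)) • ((fderiv ℝ (G i j) (f x)).comp f')
        + G i j (f x) • (co i (A x) • (co j).comp B'
            + co j (B x) • (co i).comp A')) with hD
  have hfun : (fun y => g (f y) (A y) (B y))
      = fun y => ∑ i, ∑ j, co i (A y) * co j (B y) * G i j (f y) := by
    funext y
    exact bilin_expand (g (f y)) (hlin (f y)) (hlin2 (f y)) c (A y) (B y)
  have hDer : HasFDerivAt (fun y => g (f y) (A y) (B y)) D x := by
    rw [hfun, hD]
    exact HasFDerivAt.fun_sum fun i _ => HasFDerivAt.fun_sum fun j _ => hterm i j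
  refine ⟨D, hDer, ?_⟩
  intro u
  have hDu : D u = ∑ i, ∑ j,
      ((co i (A x) * co j (B x)) * (fderiv ℝ (G i j) (f x)) (f' u)
        + G i j (f x) * (co i (A x) * co j (B' u)
            + co j (B x) * co i (A' u))) := by
    rw [hD]
    rw [ContinuousLinearMap.sum_apply]
    refine Finset.sum_congr rfl fun i _ => ?_
    rw [ContinuousLinearMap.sum_apply]
    refine Finset.sum_congr rfl fun j _ => ?_
    simp [smul_eq_mul]
    ring
  have h3 : fderiv ℝ (fun z => g z (A x) (B x)) (f x) (f' u)
      = ∑ i, ∑ j, co i (A x) * co j (B x) * (fderiv ℝ (G i j) (f x)) (f' u) := by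
    have hfun2 : (fun z => g z (A x) (B x))
        = fun z => ∑ i, ∑ j, co i (A x) * co j (B x) * G i j z := by
      funext z
      exact bilin_expand (g z) (hlin z) (hlin2 z) c (A x) (B x)
    have hd2 : HasFDerivAt (fun z => g z (A x) (B x))
        (∑ i, ∑ j, (co i (A x) * co j (B x)) • fderiv ℝ (G i j) (f x)) (f x) := by
      rw [hfun2]
      refine HasFDerivAt.fun_sum fun i _ => HasFDerivAt.fun_sum fun j _ => ?_
      exact ((hGd i j).hasFDerivAt).const_mul _
    rw [hd2.fderiv, ContinuousLinearMap.sum_apply]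
    refine Finset.sum_congr rfl fun i _ => ?_
    rw [ContinuousLinearMap.sum_apply]
    refine Finset.sum_congr rfl fun j _ => ?_
    simp [smul_eq_mul]
  have h1 : g (f x) (A' u) (B x)
      = ∑ i, ∑ j, co i (A' u) * co j (B x) * G i j (f x) :=
    bilin_expand (g (f x)) (hlin (f x)) (hlin2 (f x)) c (A' u) (B x)
  have h2 : g (f x) (A x) (B' u)
      = ∑ i, ∑ j, co i (A x) * co j (B' u) * G i j (f x) :=
    bilin_expand (g (f x)) (hlin (f x)) (hlin2 (f x)) c (A x) (B' u)
  rw [hDu, h3, h1, h2, ← Finset.sum_add_distrib, ← Finset.sum_add_distrib]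
  refine Finset.sum_congr rfl fun i _ => ?_
  rw [← Finset.sum_add_distrib, ← Finset.sum_add_distrib]
  refine Finset.sum_congr rfl fun j _ => by ring
end p5

section p6
variable [FiniteDimensional ℝ E] [FiniteDimensional ℝ F]

/-- A static bound for a bilinear form in finite dimensions. -/
theorem bilin_static_bound
    (g2 : E → E → ℝ)
    (hlin : ∀ w, IsLinearMap ℝ fun u => g2 u w)
    (hlin2 : ∀ u, IsLinearMap ℝ fun w => g2 u w) :
    ∃ C, 0 ≤ C ∧ ∀ z w, |g2 z w| ≤ C * ‖z‖ * ‖w‖ := by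
  classical
  set b := Module.finBasis ℝ E with hb
  set co : Fin (Module.finrank ℝ E) → E →L[ℝ] ℝ :=
    fun i => LinearMap.toContinuousLinearMap (b.coord i) with hco
  set K : ℝ := ∑ i, ‖co i‖ with hK
  have hKi : ∀ (i) (z : E), |b.repr z i| ≤ K * ‖z‖ := by
    intro i z
    have h1 : |b.repr z i| ≤ ‖co i‖ * ‖z‖ := by
      simpa [hco, Real.norm_eq_abs] using (co i).le_opNorm z
    refine h1.trans (mul_le_mul_of_nonneg_right ?_ (norm_nonneg z))
    exact Finset.single_le_sum (f := fun i => ‖co i‖)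
      (fun _ _ => norm_nonneg _) (Finset.mem_univ i)
  refine ⟨K * K * ∑ i, ∑ j, |g2 (b i) (b j)|, by positivity, fun z w => ?_⟩
  rw [bilin_expand g2 hlin hlin2 b z w]
  calc |∑ i, ∑ j, b.repr z i * b.repr w j * g2 (b i) (b j)|
      ≤ ∑ i, ∑ j, |b.repr z i| * |b.repr w j| * |g2 (b i) (b j)| := by
        refine (Finset.abs_sum_le_sum_abs _ _).trans ?_
        refine Finset.sum_le_sum fun i _ => ?_
        refine (Finset.abs_sum_le_sum_abs _ _).trans ?_
        refine Finset.sum_le_sum fun j _ => ?_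
        rw [abs_mul, abs_mul]
    _ ≤ ∑ i, ∑ j, (K * ‖z‖) * (K * ‖w‖) * |g2 (b i) (b j)| := by
        refine Finset.sum_le_sum fun i _ => Finset.sum_le_sum fun j _ => ?_
        have h1 := hKi i z
        have h2 := hKi j w
        have hb1 : (0:ℝ) ≤ |b.repr z i| := abs_nonneg _
        have hb2 : (0:ℝ) ≤ |b.repr w j| := abs_nonneg _
        have hk1 : (0:ℝ) ≤ K * ‖z‖ := le_trans hb1 h1
        have hk2 : (0:ℝ) ≤ K * ‖w‖ := le_trans hb2 h2
        exact mul_le_mul_of_nonneg_right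
          (mul_le_mul h1 h2 hb2 hk1) (abs_nonneg _)
    _ = K * K * (∑ i, ∑ j, |g2 (b i) (b j)|) * ‖z‖ * ‖w‖ := by
        have h1 : ∀ i : Fin (Module.finrank ℝ E),
            ∑ j, (K * ‖z‖) * (K * ‖w‖) * |g2 (b i) (b j)|
            = (K * ‖z‖) * (K * ‖w‖) * ∑ j, |g2 (b i) (b j)| := fun i => by
          rw [Finset.mul_sum]
        rw [Finset.sum_congr rfl fun i _ => h1 i, ← Finset.mul_sum]
        ring
    _ = K * K * (∑ i, ∑ j, |g2 (b i) (b j)|) * ‖z‖ * ‖w‖ := rfl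

/-- Near `x`, pairing a vertical vector against a fixed horizontal vector is
linearly small. -/
theorem vert_small
    (gM : E → E → E → ℝ) (hgM : IsMetric gM)
    (φ : E → F) (hφ : ContDiff ℝ (⊤ : ℕ∞) φ)
    (x : E) (hsurjx : Function.Surjective (fderiv ℝ φ x))
    (a : E) (ha : a ∈ Hor gM φ x) :
    ∃ C, ∀ᶠ y in nhds x, ∀ w, fderiv ℝ φ y w = 0 →
      |gM y w a| ≤ C * ‖y - x‖ * ‖w‖ := by
  obtain ⟨hgsym, hgpos, hglin, hgcd⟩ := hgM
  have hglin2 : ∀ y u, IsLinearMap ℝ fun w => gM y u w := by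
    intro y u
    exact ⟨fun s t => by rw [hgsym, (hglin y u).map_add, hgsym y s u, hgsym y t u],
      fun c s => by rw [hgsym, (hglin y u).map_smul, hgsym y s u]⟩
  obtain ⟨C1, hC1⟩ := bilin_eventual_bound gM (fun y w => hglin y w)
    (fun y u => hglin2 y u) hgcd x
  obtain ⟨Cx, hCx0, hCx⟩ := bilin_static_bound (gM x) (hglin x) (hglin2 x)
  -- a continuous linear right inverse of dφ_x
  obtain ⟨Rl, hRl⟩ := LinearMap.exists_rightInverse_of_surjective
    ((fderiv ℝ φ x : E →L[ℝ] F) : E →ₗ[ℝ] F) (LinearMap.range_eq_top.mpr hsurjx)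
  set R : F →L[ℝ] E := LinearMap.toContinuousLinearMap Rl with hR
  have hRapp : ∀ z, fderiv ℝ φ x (R z) = z := fun z => LinearMap.congr_fun hRl z
  -- local Lipschitz bound for the differential
  have hdiffd : DifferentiableAt ℝ (fderiv ℝ φ) x := by
    have h1 : ContDiff ℝ (⊤ : ℕ∞) (fderiv ℝ φ) :=
      hφ.fderiv_right (m := (⊤ : ℕ∞)) (by exact_mod_cast le_top)
    exact (h1.differentiable (by simp)).differentiableAt
  obtain ⟨L0, hL0⟩ := loc_lip hdiffd
  set L := max L0 0 with hL
  have hLev : ∀ᶠ y in nhds x, ‖fderiv ℝ φ y - fderiv ℝ φ x‖ ≤ L * ‖y - x‖ := by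
    filter_upwards [hL0] with y hy
    exact hy.trans (mul_le_mul_of_nonneg_right (le_max_left _ _) (norm_nonneg _))
  refine ⟨C1 * ‖a‖ + Cx * (‖R‖ * L) * ‖a‖, ?_⟩
  filter_upwards [hC1, hLev] with y hy hLy w hw
  have hdw : ‖fderiv ℝ φ x w‖ ≤ L * ‖y - x‖ * ‖w‖ := by
    have h1 : fderiv ℝ φ x w = (fderiv ℝ φ x - fderiv ℝ φ y) w := by
      rw [ContinuousLinearMap.sub_apply, hw, sub_zero]
    rw [h1]
    calc ‖(fderiv ℝ φ x - fderiv ℝ φ y) w‖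
        ≤ ‖fderiv ℝ φ x - fderiv ℝ φ y‖ * ‖w‖ :=
          ContinuousLinearMap.le_opNorm _ w
      _ ≤ (L * ‖y - x‖) * ‖w‖ := by
          refine mul_le_mul_of_nonneg_right ?_ (norm_nonneg _)
          rw [norm_sub_rev]
          exact hLy
  set kw := w - R (fderiv ℝ φ x w) with hkw
  have hkwvert : fderiv ℝ φ x kw = 0 := by
    rw [hkw, map_sub, hRapp, sub_self]
  have hkw0 : gM x kw a = 0 := by
    rw [hgsym]
    exact ha kw hkwvert
  have hRw : ‖R (fderiv ℝ φ x w)‖ ≤ ‖R‖ * (L * ‖y - x‖ * ‖w‖) := by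
    calc ‖R (fderiv ℝ φ x w)‖ ≤ ‖R‖ * ‖fderiv ℝ φ x w‖ := R.le_opNorm _
      _ ≤ ‖R‖ * (L * ‖y - x‖ * ‖w‖) :=
          mul_le_mul_of_nonneg_left hdw (norm_nonneg R)
  have hsplit : gM x w a = gM x kw a + gM x (R (fderiv ℝ φ x w)) a := by
    have : w = kw + R (fderiv ℝ φ x w) := by rw [hkw]; abel
    conv_lhs => rw [this]
    exact (hglin x a).map_add _ _
  have hterm2 : |gM x w a| ≤ Cx * (‖R‖ * L) * ‖a‖ * ‖y - x‖ * ‖w‖ := by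
    rw [hsplit, hkw0, zero_add]
    calc |gM x (R (fderiv ℝ φ x w)) a|
        ≤ Cx * ‖R (fderiv ℝ φ x w)‖ * ‖a‖ := hCx _ _
      _ ≤ Cx * (‖R‖ * (L * ‖y - x‖ * ‖w‖)) * ‖a‖ := by
          have := mul_le_mul_of_nonneg_left hRw hCx0
          nlinarith [norm_nonneg a]
      _ = Cx * (‖R‖ * L) * ‖a‖ * ‖y - x‖ * ‖w‖ := by ring
  calc |gM y w a| ≤ |gM y w a - gM x w a| + |gM x w a| := by
        have h2 := abs_add_le (gM y w a - gM x w a) (gM x w a)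
        simpa using h2
    _ ≤ C1 * ‖y - x‖ * ‖w‖ * ‖a‖ + Cx * (‖R‖ * L) * ‖a‖ * ‖y - x‖ * ‖w‖ := by
        have := hy w a
        linarith [hterm2]
    _ = (C1 * ‖a‖ + Cx * (‖R‖ * L) * ‖a‖) * ‖y - x‖ * ‖w‖ := by ring
end p6

section p7
variable [FiniteDimensional ℝ E] [FiniteDimensional ℝ F]

/-- The pairing identity for a horizontally conformal submersion. -/
theorem hc_pair
    (gM : E → E → E → ℝ) (hgsym : ∀ y u w, gM y u w = gM y w u)
    (hglin : ∀ y w, IsLinearMap ℝ fun u => gM y u w)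
    (gN : F → F → F → ℝ) (φ : E → F) (lam : E → ℝ)
    (hconf : ∀ y, ∀ X ∈ Hor gM φ y, ∀ Y ∈ Hor gM φ y,
      gN (φ y) (fderiv ℝ φ y X) (fderiv ℝ φ y Y) = lam y * gM y X Y)
    (Ph : E → E → E)
    (hPh : ∀ y u, Ph y u ∈ Hor gM φ y ∧ fderiv ℝ φ y (u - Ph y u) = 0)
    (y u w : E) (hw : w ∈ Hor gM φ y) :
    gN (φ y) (fderiv ℝ φ y u) (fderiv ℝ φ y w) = lam y * gM y u w := by
  have hueq : fderiv ℝ φ y u = fderiv ℝ φ y (Ph y u) := by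
    have h := (hPh y u).2
    rw [map_sub] at h
    exact sub_eq_zero.mp h
  rw [hueq, hconf y (Ph y u) (hPh y u).1 w hw]
  congr 1
  have hdecomp : gM y u w = gM y (Ph y u) w + gM y (u - Ph y u) w := by
    have h1 : u = Ph y u + (u - Ph y u) := by abel
    conv_lhs => rw [h1]
    exact (hglin y w).map_add _ _
  have hzero : gM y (u - Ph y u) w = 0 := by
    rw [hgsym]
    exact hw _ (hPh y u).2
  linarith

set_option maxHeartbeats 1000000 in
/-- The correction term `λ g(Pv a, Pv b)` has vanishing derivative at `x` when
`a`, `b` are horizontal at `x`. -/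
theorem rho_deriv_zero
    (gM : E → E → E → ℝ) (hgM : IsMetric gM)
    (φ : E → F) (hφ : ContDiff ℝ (⊤ : ℕ∞) φ)
    (lam : E → ℝ) (hlam : ContDiff ℝ (⊤ : ℕ∞) lam)
    (Ph : E → E → E)
    (hPh : ∀ y u, Ph y u ∈ Hor gM φ y ∧ fderiv ℝ φ y (u - Ph y u) = 0)
    (x : E) (hsurjx : Function.Surjective (fderiv ℝ φ x)) (hNE : Nontrivial E)
    (a b : E) (ha : a ∈ Hor gM φ x) (hb : b ∈ Hor gM φ x) :
    HasFDerivAt (fun y => lam y * gM y (a - Ph y a) (b - Ph y b))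
      (0 : E →L[ℝ] ℝ) x := by
  haveI := hNE
  obtain ⟨hgsym, hgpos, hglin, hgcd⟩ := hgM
  have hglin2 : ∀ y u, IsLinearMap ℝ fun w => gM y u w := by
    intro y u
    exact ⟨fun s t => by rw [hgsym, (hglin y u).map_add, hgsym y s u, hgsym y t u],
      fun c s => by rw [hgsym, (hglin y u).map_smul, hgsym y s u]⟩
  obtain ⟨C1, hC1⟩ := bilin_eventual_bound gM (fun y w => hglin y w)
    (fun y u => hglin2 y u) hgcd x
  obtain ⟨c0, hc0pos, hc0⟩ := posdef_coercive (gM x) (hgsym x) (hgpos x)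
    (fun w => hglin x w)
  obtain ⟨Ca0, hCa⟩ := vert_small gM ⟨hgsym, hgpos, hglin, hgcd⟩ φ hφ x hsurjx a ha
  obtain ⟨Cb0, hCb⟩ := vert_small gM ⟨hgsym, hgpos, hglin, hgcd⟩ φ hφ x hsurjx b hb
  obtain ⟨Cl, hCl⟩ := loc_lip (f := lam) (x := x)
    ((hlam.differentiable (by simp)).differentiableAt)
  set Ca := max Ca0 0 with hCadef
  set Cb := max Cb0 0 with hCbdef
  have hCa' : ∀ᶠ y in nhds x, ∀ w, fderiv ℝ φ y w = 0 →
      |gM y w a| ≤ Ca * ‖y - x‖ * ‖w‖ := by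
    filter_upwards [hCa] with y hy w hw
    refine (hy w hw).trans ?_
    exact mul_le_mul_of_nonneg_right
      (mul_le_mul_of_nonneg_right (le_max_left _ _) (norm_nonneg _))
      (norm_nonneg _)
  have hCb' : ∀ᶠ y in nhds x, ∀ w, fderiv ℝ φ y w = 0 →
      |gM y w b| ≤ Cb * ‖y - x‖ * ‖w‖ := by
    filter_upwards [hCb] with y hy w hw
    refine (hy w hw).trans ?_
    exact mul_le_mul_of_nonneg_right
      (mul_le_mul_of_nonneg_right (le_max_left _ _) (norm_nonneg _))
      (norm_nonneg _)
  have hCanneg : 0 ≤ Ca := le_max_right _ _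
  have hCbnneg : 0 ≤ Cb := le_max_right _ _
  set Ml := |lam x| + |Cl| with hMl
  have hMlnneg : 0 ≤ Ml := by positivity
  set Kt := Ml * (Cb * (2 * Ca / c0)) with hKt
  have hKtnneg : 0 ≤ Kt := by positivity
  -- the key global identity: reduce the second argument
  have hredgen : ∀ y c, gM y (a - Ph y a) (c - Ph y c) = gM y (a - Ph y a) c := by
    intro y c
    have h1 : ∀ s t : E, gM y (a - Ph y a) (s + t)
        = gM y (a - Ph y a) s + gM y (a - Ph y a) t :=
      fun s t => (hglin2 y (a - Ph y a)).map_add s t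
    have h2 : gM y (a - Ph y a) (Ph y c) = 0 := by
      rw [hgsym]
      exact (hPh y c).1 _ (hPh y a).2
    have h3 : gM y (a - Ph y a) c
        = gM y (a - Ph y a) (Ph y c) + gM y (a - Ph y a) (c - Ph y c) := by
      rw [← h1]
      congr 1
      abel
    rw [h3, h2, zero_add]
  have hred : ∀ y, gM y (a - Ph y a) (b - Ph y b) = gM y (a - Ph y a) b :=
    fun y => hredgen y b
  have hreda : ∀ y, gM y (a - Ph y a) (a - Ph y a) = gM y (a - Ph y a) a :=
    fun y => hredgen y a
  have hfx : lam x * gM x (a - Ph x a) (b - Ph x b) = 0 := by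
    have h1 : gM x (a - Ph x a) (b - Ph x b) = gM x (a - Ph x a) b := hred x
    have h2 : gM x (a - Ph x a) b = 0 := by
      rw [hgsym]
      exact hb _ (hPh x a).2
    rw [h1, h2, mul_zero]
  rw [hasFDerivAt_iff_isLittleO]
  simp only [hfx, ContinuousLinearMap.zero_apply, sub_zero]
  rw [Asymptotics.isLittleO_iff]
  intro c hc
  have hδpos : 0 < min 1 (min (c0 / (2 * (|C1| + 1))) (c / (Kt + 1))) := by
    positivity
  filter_upwards [hC1, hCa', hCb', hCl,
    Metric.ball_mem_nhds x hδpos] with y hy1 hya hyb hylam hball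
  set h := ‖y - x‖ with hh
  have hballs := Metric.mem_ball.mp hball
  rw [dist_eq_norm] at hballs
  have hh1 : h ≤ 1 := le_of_lt (lt_of_lt_of_le hballs (min_le_left _ _))
  have hh2 : h ≤ c0 / (2 * (|C1| + 1)) :=
    le_of_lt (lt_of_lt_of_le hballs ((min_le_right _ _).trans (min_le_left _ _)))
  have hh3 : h ≤ c / (Kt + 1) :=
    le_of_lt (lt_of_lt_of_le hballs ((min_le_right _ _).trans (min_le_right _ _)))
  have hhnneg : 0 ≤ h := norm_nonneg _
  set w0 := a - Ph y a with hw0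
  have hw0vert : fderiv ℝ φ y w0 = 0 := (hPh y a).2
  -- coercivity of gM y near x
  have hcoy : (c0 / 2) * (‖w0‖ * ‖w0‖) ≤ gM y w0 w0 := by
    have h1 : c0 * (‖w0‖ * ‖w0‖) ≤ gM x w0 w0 := hc0 w0
    have h2 : |gM y w0 w0 - gM x w0 w0| ≤ C1 * h * ‖w0‖ * ‖w0‖ := hy1 w0 w0
    have h3 : C1 * h ≤ c0 / 2 := by
      have hC1abs : C1 * h ≤ |C1| * h :=
        mul_le_mul_of_nonneg_right (le_abs_self C1) hhnneg
      have : |C1| * h ≤ |C1| * (c0 / (2 * (|C1| + 1))) :=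
        mul_le_mul_of_nonneg_left hh2 (abs_nonneg C1)
      have hfr : |C1| * (c0 / (2 * (|C1| + 1))) ≤ c0 / 2 := by
        have hD : (0:ℝ) < 2 * (|C1| + 1) := by positivity
        rw [← mul_div_assoc, div_le_iff₀ hD]
        nlinarith [le_of_lt hc0pos, abs_nonneg C1]
      linarith
    have h4 : gM x w0 w0 - C1 * h * ‖w0‖ * ‖w0‖ ≤ gM y w0 w0 := by
      have := abs_le.mp h2
      linarith
    nlinarith [norm_nonneg w0]
  -- smallness of w0
  have hw0small : ‖w0‖ ≤ (2 * Ca / c0) * h := by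
    by_cases hz : ‖w0‖ = 0
    · rw [hz]; positivity
    · have hzpos : 0 < ‖w0‖ := lt_of_le_of_ne (norm_nonneg _) (Ne.symm hz)
      have h1 : gM y w0 w0 = gM y w0 a := hreda y
      have h2 : gM y w0 a ≤ |gM y w0 a| := le_abs_self _
      have h3 : |gM y w0 a| ≤ Ca * h * ‖w0‖ := hya w0 hw0vert
      have h4 : (c0 / 2) * (‖w0‖ * ‖w0‖) ≤ Ca * h * ‖w0‖ := by linarith
      have h5 : (c0 / 2) * ‖w0‖ ≤ Ca * h := by
        have hmul : (c0 / 2) * ‖w0‖ * ‖w0‖ ≤ Ca * h * ‖w0‖ := by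
          calc (c0 / 2) * ‖w0‖ * ‖w0‖ = (c0 / 2) * (‖w0‖ * ‖w0‖) := by ring
            _ ≤ Ca * h * ‖w0‖ := h4
        exact le_of_mul_le_mul_right hmul hzpos
      have h6 : ‖w0‖ ≤ (Ca * h) / (c0 / 2) := by
        rw [le_div_iff₀ (by positivity)]
        linarith
      have h7 : (Ca * h) / (c0 / 2) = (2 * Ca / c0) * h := by
        field_simp
      rw [← h7]
      exact h6
  -- the final bound
  have hlamb : |lam y| ≤ Ml := by
    have h1 : |lam y - lam x| ≤ Cl * h := by simpa using hylam
    have h2 : Cl * h ≤ |Cl| := by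
      have := mul_le_mul_of_nonneg_right (le_abs_self Cl) hhnneg
      nlinarith [abs_nonneg Cl]
    have := abs_sub_abs_le_abs_sub (lam y) (lam x)
    rw [hMl]
    linarith
  have hbnd : |lam y * gM y (a - Ph y a) (b - Ph y b)| ≤ Kt * h * h := by
    rw [hred y, abs_mul]
    have h1 : |gM y w0 b| ≤ Cb * h * ‖w0‖ := hyb w0 hw0vert
    have h2 : |gM y w0 b| ≤ Cb * h * ((2 * Ca / c0) * h) :=
      h1.trans (mul_le_mul_of_nonneg_left hw0small (mul_nonneg hCbnneg hhnneg))
    calc |lam y| * |gM y w0 b| ≤ Ml * (Cb * h * ((2 * Ca / c0) * h)) := by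
          refine mul_le_mul hlamb h2 (abs_nonneg _) hMlnneg
      _ = Kt * h * h := by rw [hKt]; ring
  calc ‖lam y * gM y (a - Ph y a) (b - Ph y b)‖
      = |lam y * gM y (a - Ph y a) (b - Ph y b)| := rfl
    _ ≤ Kt * h * h := hbnd
    _ ≤ Kt * h * (c / (Kt + 1)) := by
        refine mul_le_mul_of_nonneg_left hh3 ?_
        positivity
    _ ≤ c * h := by
        rw [div_eq_mul_inv]
        have hKi : Kt * (Kt + 1)⁻¹ ≤ 1 := by
          rw [mul_inv_le_iff₀ (by positivity)]
          linarith
        calc Kt * h * (c * (Kt + 1)⁻¹)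
            = (Kt * (Kt + 1)⁻¹) * c * h := by ring
          _ ≤ 1 * c * h := by
              refine mul_le_mul_of_nonneg_right ?_ hhnneg
              exact mul_le_mul_of_nonneg_right hKi (le_of_lt hc)
          _ = c * h := by ring
    _ = c * ‖y - x‖ := rfl
end p7

set_option maxHeartbeats 1600000 in
/-- For a horizontally conformal submersion `φ : M → N` with dilatation
`λ`, `dim M = m`, `dim N = n`, the tension field satisfies
`τ(φ) = −((n−2)/2) φ_*(grad(ln λ)) − (m−n) φ_*(κ_φ)`, where
`κ_φ = (1/(m−n)) Σⱼ (∇^M_{vⱼ} vⱼ)^⊥` is the mean curvature of the fibres, computed from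
an orthonormal frame `v` of the vertical distribution `V^φ = ker φ_*` at `x`, `Ph` the
`g`-orthogonal projection onto `H^φ`, and `τ(φ)(x) = Σᵢ B(eᵢ,eᵢ)` over a `g`-orthonormal
basis `e` of `T_x M`.  (`grad ln λ = (1/λ) grad λ`.) -/
theorem stmt18
    (gM : E → E → E → ℝ) (gN : F → F → F → ℝ)
    (ΓM : E → E → E → E) (ΓN : F → F → F → F)
    (hgM : IsMetric gM) (hgN : IsMetric gN)
    (hΓM : IsLeviCivita gM ΓM) (hΓN : IsLeviCivita gN ΓN)
    (φ : E → F) (hφ : ContDiff ℝ (⊤ : ℕ∞) φ)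
    [FiniteDimensional ℝ E] [FiniteDimensional ℝ F]
    (hdim : Module.finrank ℝ F < Module.finrank ℝ E)
    (lam : E → ℝ) (hlam : ContDiff ℝ (⊤ : ℕ∞) lam)
    (hHC : HCSub gM gN φ lam)
    (gradlam : E → E)
    (hgrad : ∀ y u, gM y (gradlam y) u = fderiv ℝ lam y u)
    -- `Ph` is the `g`-orthogonal projection onto the horizontal distribution
    (Ph : E → E → E)
    (hPh : ∀ y u, Ph y u ∈ Hor gM φ y ∧ fderiv ℝ φ y (u - Ph y u) = 0)
    (x : E)
    -- a `g`-orthonormal basis of `T_x M`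
    (e : Fin (Module.finrank ℝ E) → E)
    (heON : ∀ i j, gM x (e i) (e j) = if i = j then 1 else 0)
    (hespan : Submodule.span ℝ (Set.range e) = ⊤)
    -- an orthonormal frame of vertical vector fields spanning `V^φ` at `x`
    (v : Fin (Module.finrank ℝ E - Module.finrank ℝ F) → (E → E))
    (hvdiff : ∀ j, Differentiable ℝ (v j))
    (hvvert : ∀ j y, fderiv ℝ φ y (v j y) = 0)
    (hvON : ∀ i j, gM x (v i x) (v j x) = if i = j then 1 else 0)
    (hvspan : ∀ u, fderiv ℝ φ x u = 0 →
      u ∈ Submodule.span ℝ (Set.range fun j => v j x)) :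
    ∑ i, sff ΓM ΓN φ x (e i) (e i)
      = -(((Module.finrank ℝ F : ℝ) - 2) / 2) •
            fderiv ℝ φ x ((lam x)⁻¹ • gradlam x)
        - ((Module.finrank ℝ E : ℝ) - (Module.finrank ℝ F : ℝ)) •
            fderiv ℝ φ x
              (((Module.finrank ℝ E : ℝ) - (Module.finrank ℝ F : ℝ))⁻¹ •
                ∑ j, Ph x (fderiv ℝ (v j) x (v j x) + ΓM x (v j x) (v j x))) := by
  classical
  obtain ⟨hsurj, hlampos, hconf⟩ := hHC
  obtain ⟨hgsym, hgpos, hglin, hgcd⟩ := hgM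
  obtain ⟨hNsym, hNpos, hNlin, hNcd⟩ := hgN
  obtain ⟨⟨hMl1, hMl2, hMcd⟩, hMsymm, hMlc⟩ := hΓM
  obtain ⟨⟨hNl1, hNl2, hNcd'⟩, hNsymm, hNlc⟩ := hΓN
  have hglin2 : ∀ y u, IsLinearMap ℝ fun t => gM y u t := by
    intro y u
    exact ⟨fun s t => by rw [hgsym, (hglin y u).map_add, hgsym y s u, hgsym y t u],
      fun c s => by rw [hgsym, (hglin y u).map_smul, hgsym y s u]⟩
  have hNlin2 : ∀ z u, IsLinearMap ℝ fun t => gN z u t := by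
    intro z u
    exact ⟨fun s t => by rw [hNsym, (hNlin z u).map_add, hNsym z s u, hNsym z t u],
      fun c s => by rw [hNsym, (hNlin z u).map_smul, hNsym z s u]⟩
  have hmpos : 0 < Module.finrank ℝ E :=
    lt_of_le_of_lt (Nat.zero_le _) hdim
  haveI hNE : Nontrivial E := Module.nontrivial_of_finrank_pos hmpos
  -- smoothness facts
  have hφdiff : ∀ y, DifferentiableAt ℝ φ y :=
    fun y => (hφ.differentiable (by simp)).differentiableAt
  have hdφC : ContDiff ℝ (⊤ : ℕ∞) (fderiv ℝ φ) :=
    hφ.fderiv_right (by exact_mod_cast le_top)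
  have hH2d : DifferentiableAt ℝ (fderiv ℝ φ) x :=
    (hdφC.differentiable (by simp)).differentiableAt
  have hlamd : DifferentiableAt ℝ lam x :=
    (hlam.differentiable (by simp)).differentiableAt
  -- second derivative
  have hHess : ∀ X Y : E, fderiv ℝ (fun y => fderiv ℝ φ y Y) x X
      = fderiv ℝ (fderiv ℝ φ) x X Y := by
    intro X Y
    have h := fderiv_clm_apply (c := fderiv ℝ φ) (u := fun _ => Y) hH2d
      (differentiableAt_const Y)
    rw [h]
    simp
  have hsym2 : ∀ X Y : E, fderiv ℝ (fderiv ℝ φ) x X Y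
      = fderiv ℝ (fderiv ℝ φ) x Y X := by
    have hs : IsSymmSndFDerivAt ℝ φ x := by
      refine hφ.contDiffAt.isSymmSndFDerivAt ?_
      have h : ((2:ℕ∞) : WithTop ℕ∞) ≤ ((⊤:ℕ∞) : WithTop ℕ∞) := by
        exact_mod_cast le_top
      simpa using h
    exact hs
  have hsffH : ∀ X Y, sff ΓM ΓN φ x X Y
      = fderiv ℝ (fderiv ℝ φ) x X Y
        + ΓN (φ x) (fderiv ℝ φ x X) (fderiv ℝ φ x Y)
        - fderiv ℝ φ x (ΓM x X Y) := by
    intro X Y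
    rw [sff, hHess]
  have hsffsym : ∀ X Y, sff ΓM ΓN φ x X Y = sff ΓM ΓN φ x Y X := by
    intro X Y
    rw [hsffH, hsffH, hsym2 X Y, hNsymm, hMsymm]
  -- pairing identity at x
  have hpair : ∀ u t, t ∈ Hor gM φ x →
      gN (φ x) (fderiv ℝ φ x u) (fderiv ℝ φ x t) = lam x * gM x u t :=
    fun u t ht => hc_pair gM hgsym hglin gN φ lam hconf Ph hPh x u t ht
  -- nondegeneracy
  have hinj : ∀ W : F, (∀ Z : E, gN (φ x) W (fderiv ℝ φ x Z) = 0) → W = 0 := by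
    intro W h
    by_contra hW
    obtain ⟨Z, hZ⟩ := hsurj x W
    have h2 := h Z
    rw [hZ] at h2
    exact absurd h2 (ne_of_gt (hNpos (φ x) W hW))
  have hPhdφ : ∀ u, fderiv ℝ φ x (Ph x u) = fderiv ℝ φ x u := by
    intro u
    have h := (hPh x u).2
    rw [map_sub] at h
    exact (sub_eq_zero.mp h).symm
  -- ============ the fundamental identity E1 ============
  have E1 : ∀ a, a ∈ Hor gM φ x → ∀ b, b ∈ Hor gM φ x → ∀ u,
      gN (φ x) (sff ΓM ΓN φ x u a) (fderiv ℝ φ x b)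
        + gN (φ x) (fderiv ℝ φ x a) (sff ΓM ΓN φ x u b)
      = fderiv ℝ lam x u * gM x a b := by
    intro a ha b hb u
    have hA : HasFDerivAt (fun y => fderiv ℝ φ y a)
        ((ContinuousLinearMap.apply ℝ F a).comp (fderiv ℝ (fderiv ℝ φ) x)) x :=
      ((ContinuousLinearMap.apply ℝ F a).hasFDerivAt).comp x hH2d.hasFDerivAt
    have hB : HasFDerivAt (fun y => fderiv ℝ φ y b)
        ((ContinuousLinearMap.apply ℝ F b).comp (fderiv ℝ (fderiv ℝ φ) x)) x :=
      ((ContinuousLinearMap.apply ℝ F b).hasFDerivAt).comp x hH2d.hasFDerivAt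
    obtain ⟨D, hD, hDu⟩ := CR gN hNlin hNlin2 hNcd (hφdiff x).hasFDerivAt hA hB
    -- the other computation of the same derivative
    have hgab : DifferentiableAt ℝ (fun y => gM y a b) x :=
      ((hgcd a b).differentiable (by simp)).differentiableAt
    have hν : HasFDerivAt (fun y => lam y * gM y a b)
        (lam x • fderiv ℝ (fun y => gM y a b) x
          + gM x a b • fderiv ℝ lam x) x :=
      hlamd.hasFDerivAt.mul hgab.hasFDerivAt
    have hρ := rho_deriv_zero gM ⟨hgsym, hgpos, hglin, hgcd⟩ φ hφ lam hlam
      Ph hPh x (hsurj x) hNE a b ha hb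
    have hglobal : (fun y => gN (φ y) (fderiv ℝ φ y a) (fderiv ℝ φ y b))
        = fun y => lam y * gM y a b
            - lam y * gM y (a - Ph y a) (b - Ph y b) := by
      funext y
      have hbeq : fderiv ℝ φ y b = fderiv ℝ φ y (Ph y b) := by
        have h := (hPh y b).2
        rw [map_sub] at h
        exact sub_eq_zero.mp h
      have h1 : gN (φ y) (fderiv ℝ φ y a) (fderiv ℝ φ y b)
          = lam y * gM y a (Ph y b) := by
        rw [hbeq]
        have := hc_pair gM hgsym hglin gN φ lam hconf Ph hPh y a (Ph y b)
          (hPh y b).1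
        exact this
      have h2 : gM y a (Ph y b) = gM y a b - gM y a (b - Ph y b) := by
        have h := (hglin2 y a).map_sub b (b - Ph y b)
        rw [sub_sub_cancel] at h
        exact h
      have h3 : gM y a (b - Ph y b)
          = gM y (Ph y a) (b - Ph y b) + gM y (a - Ph y a) (b - Ph y b) := by
        have h4 := (hglin y (b - Ph y b)).map_add (Ph y a) (a - Ph y a)
        have h5 : Ph y a + (a - Ph y a) = a := by abel
        rw [h5] at h4
        exact h4
      have h6 : gM y (Ph y a) (b - Ph y b) = 0 := (hPh y a).1 _ (hPh y b).2
      rw [h1, h2, h3, h6, zero_add]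
      ring
    have hμν : HasFDerivAt (fun y => gN (φ y) (fderiv ℝ φ y a) (fderiv ℝ φ y b))
        ((lam x • fderiv ℝ (fun y => gM y a b) x + gM x a b • fderiv ℝ lam x)
          - 0) x := by
      rw [hglobal]
      exact hν.sub hρ
    have hDeq : D = (lam x • fderiv ℝ (fun y => gM y a b) x
        + gM x a b • fderiv ℝ lam x) - 0 := hD.unique hμν
    -- evaluate both expressions for D u
    have hev := hDu u
    have hev2 : D u = lam x * fderiv ℝ (fun y => gM y a b) x u
        + gM x a b * fderiv ℝ lam x u := by
      rw [hDeq]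
      simp [smul_eq_mul]
    -- expand the terms
    have hApp : ((ContinuousLinearMap.apply ℝ F a).comp
        (fderiv ℝ (fderiv ℝ φ) x)) u = fderiv ℝ (fderiv ℝ φ) x u a := by
      simp
    have hBpp : ((ContinuousLinearMap.apply ℝ F b).comp
        (fderiv ℝ (fderiv ℝ φ) x)) u = fderiv ℝ (fderiv ℝ φ) x u b := by
      simp
    rw [hApp, hBpp] at hev
    have hQ : fderiv ℝ (fun z => gN z (fderiv ℝ φ x a) (fderiv ℝ φ x b)) (φ x)
        (fderiv ℝ φ x u)
        = gN (φ x) (ΓN (φ x) (fderiv ℝ φ x u) (fderiv ℝ φ x a)) (fderiv ℝ φ x b)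
          + gN (φ x) (fderiv ℝ φ x a)
            (ΓN (φ x) (fderiv ℝ φ x u) (fderiv ℝ φ x b)) :=
      hNlc (φ x) (fderiv ℝ φ x a) (fderiv ℝ φ x b) (fderiv ℝ φ x u)
    have hH2ua : fderiv ℝ (fderiv ℝ φ) x u a
        = sff ΓM ΓN φ x u a - ΓN (φ x) (fderiv ℝ φ x u) (fderiv ℝ φ x a)
          + fderiv ℝ φ x (ΓM x u a) := by
      rw [hsffH]
      abel
    have hH2ub : fderiv ℝ (fderiv ℝ φ) x u b
        = sff ΓM ΓN φ x u b - ΓN (φ x) (fderiv ℝ φ x u) (fderiv ℝ φ x b)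
          + fderiv ℝ φ x (ΓM x u b) := by
      rw [hsffH]
      abel
    have hsplit1 : gN (φ x) (fderiv ℝ (fderiv ℝ φ) x u a) (fderiv ℝ φ x b)
        = gN (φ x) (sff ΓM ΓN φ x u a) (fderiv ℝ φ x b)
          - gN (φ x) (ΓN (φ x) (fderiv ℝ φ x u) (fderiv ℝ φ x a))
              (fderiv ℝ φ x b)
          + lam x * gM x (ΓM x u a) b := by
      rw [hH2ua, (hNlin (φ x) (fderiv ℝ φ x b)).map_add,
        (hNlin (φ x) (fderiv ℝ φ x b)).map_sub]
      rw [hpair (ΓM x u a) b hb]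
    have hsplit2 : gN (φ x) (fderiv ℝ φ x a) (fderiv ℝ (fderiv ℝ φ) x u b)
        = gN (φ x) (fderiv ℝ φ x a) (sff ΓM ΓN φ x u b)
          - gN (φ x) (fderiv ℝ φ x a)
              (ΓN (φ x) (fderiv ℝ φ x u) (fderiv ℝ φ x b))
          + lam x * gM x a (ΓM x u b) := by
      rw [hH2ub, (hNlin2 (φ x) (fderiv ℝ φ x a)).map_add,
        (hNlin2 (φ x) (fderiv ℝ φ x a)).map_sub]
      have h7 : gN (φ x) (fderiv ℝ φ x a) (fderiv ℝ φ x (ΓM x u b))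
          = lam x * gM x a (ΓM x u b) := by
        rw [hNsym, hpair (ΓM x u b) a ha, hgsym]
      rw [h7]
    have hLCM := hMlc x a b u
    rw [hQ, hsplit1, hsplit2] at hev
    rw [hev2, hLCM] at hev
    linarith
  -- ============ vertical terms ============
  have hvert : ∀ j, sff ΓM ΓN φ x (v j x) (v j x)
      = - fderiv ℝ φ x (fderiv ℝ (v j) x (v j x) + ΓM x (v j x) (v j x)) := by
    intro j
    have hz : (fun y => fderiv ℝ φ y (v j y)) = fun _ => (0 : F) :=
      funext fun y => hvvert j y
    have hd0 : fderiv ℝ (fun y => fderiv ℝ φ y (v j y)) x = 0 := by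
      rw [hz]
      exact fderiv_const_apply 0
    have hclm := fderiv_clm_apply (c := fderiv ℝ φ) (u := v j) hH2d
      ((hvdiff j).differentiableAt)
    rw [hd0] at hclm
    have happ := congrArg (fun L : E →L[ℝ] F => L (v j x)) hclm
    simp only [ContinuousLinearMap.zero_apply, ContinuousLinearMap.add_apply,
      ContinuousLinearMap.comp_apply, ContinuousLinearMap.flip_apply] at happ
    -- happ : 0 = dφ (dv (v j x)) + H2 (v j x) (v j x)
    have hH2vv : fderiv ℝ (fderiv ℝ φ) x (v j x) (v j x)
        = - fderiv ℝ φ x (fderiv ℝ (v j) x (v j x)) := by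
      exact eq_neg_of_add_eq_zero_right happ.symm
    rw [hsffH, hH2vv, hvvert j x]
    have hΓN0 : ΓN (φ x) (0 : F) (0 : F) = 0 := (hNl1 (φ x) 0).map_zero
    rw [hΓN0, map_add]
    abel
  -- ============ the adapted frame ============
  obtain ⟨w, hwperp, hfON, hfspan⟩ := exists_adapted_frame (gM x) (hgsym x)
    (hgpos x) (fun t => hglin x t) (fun j => v j x) hvON
  have hwHor : ∀ aa, w aa ∈ Hor gM φ x := by
    intro aa Z hZ
    exact hwperp aa Z (hvspan Z hZ)
  -- bilinearity of the second fundamental form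
  have hadd1 : ∀ (X X' Y : E), sff ΓM ΓN φ x (X + X') Y
      = sff ΓM ΓN φ x X Y + sff ΓM ΓN φ x X' Y := by
    intro X X' Y
    have e1 : fderiv ℝ (fderiv ℝ φ) x (X + X') Y
        = fderiv ℝ (fderiv ℝ φ) x X Y + fderiv ℝ (fderiv ℝ φ) x X' Y := by
      rw [map_add, ContinuousLinearMap.add_apply]
    have e2 : ΓN (φ x) (fderiv ℝ φ x (X + X')) (fderiv ℝ φ x Y)
        = ΓN (φ x) (fderiv ℝ φ x X) (fderiv ℝ φ x Y)
          + ΓN (φ x) (fderiv ℝ φ x X') (fderiv ℝ φ x Y) := by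
      rw [map_add]
      exact (hNl1 (φ x) (fderiv ℝ φ x Y)).map_add _ _
    have e3 : ΓM x (X + X') Y = ΓM x X Y + ΓM x X' Y := (hMl1 x Y).map_add X X'
    rw [hsffH, hsffH, hsffH, e1, e2, e3, map_add]
    abel
  have hsmul1 : ∀ (c : ℝ) (X Y : E), sff ΓM ΓN φ x (c • X) Y
      = c • sff ΓM ΓN φ x X Y := by
    intro c X Y
    have e1 : fderiv ℝ (fderiv ℝ φ) x (c • X) Y
        = c • fderiv ℝ (fderiv ℝ φ) x X Y := by
      rw [map_smul, ContinuousLinearMap.smul_apply]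
    have e2 : ΓN (φ x) (fderiv ℝ φ x (c • X)) (fderiv ℝ φ x Y)
        = c • ΓN (φ x) (fderiv ℝ φ x X) (fderiv ℝ φ x Y) := by
      rw [map_smul]
      exact (hNl1 (φ x) (fderiv ℝ φ x Y)).map_smul c _
    have e3 : ΓM x (c • X) Y = c • ΓM x X Y := (hMl1 x Y).map_smul c X
    rw [hsffH, hsffH, e1, e2, e3, map_smul, smul_sub, smul_add]
  have hadd2 : ∀ (X Y Y' : E), sff ΓM ΓN φ x X (Y + Y')
      = sff ΓM ΓN φ x X Y + sff ΓM ΓN φ x X Y' := by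
    intro X Y Y'
    rw [hsffsym X (Y + Y'), hadd1 Y Y' X, hsffsym Y X, hsffsym Y' X]
  have hsmul2 : ∀ (c : ℝ) (X Y : E), sff ΓM ΓN φ x X (c • Y)
      = c • sff ΓM ΓN φ x X Y := by
    intro c X Y
    rw [hsffsym X (c • Y), hsmul1 c Y X, hsffsym Y X]
  set B2 : E →ₗ[ℝ] E →ₗ[ℝ] F :=
    LinearMap.mk₂ ℝ (sff ΓM ΓN φ x) hadd1 hsmul1 hadd2 hsmul2 with hB2
  have hsffB2 : ∀ X Y, sff ΓM ΓN φ x X Y = B2 X Y := fun X Y => rfl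
  set f : (Fin (Module.finrank ℝ E - Module.finrank ℝ F) ⊕
      Fin (Module.finrank ℝ E - (Module.finrank ℝ E - Module.finrank ℝ F))) → E :=
    Sum.elim (fun j => v j x) w with hfdef
  have htr := trace_indep (gM x) (hgsym x) (hgpos x) (fun t => hglin x t)
    e f heON hespan hfON hfspan B2
  have htrace : ∑ i, sff ΓM ΓN φ x (e i) (e i)
      = ∑ j, sff ΓM ΓN φ x (v j x) (v j x)
        + ∑ aa, sff ΓM ΓN φ x (w aa) (w aa) := by
    calc ∑ i, sff ΓM ΓN φ x (e i) (e i) = ∑ i, B2 (e i) (e i) :=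
          Finset.sum_congr rfl fun i _ => hsffB2 _ _
      _ = ∑ p, B2 (f p) (f p) := htr
      _ = ∑ p, sff ΓM ΓN φ x (f p) (f p) :=
          Finset.sum_congr rfl fun p _ => (hsffB2 _ _).symm
      _ = ∑ j, sff ΓM ΓN φ x (v j x) (v j x)
          + ∑ aa, sff ΓM ΓN φ x (w aa) (w aa) := by
          rw [Fintype.sum_sum_type]
          rfl
  -- ============ the horizontal part ============
  have hnn : Module.finrank ℝ E - (Module.finrank ℝ E - Module.finrank ℝ F)
      = Module.finrank ℝ F := Nat.sub_sub_self (le_of_lt hdim)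
  set cst : ℝ := ((Module.finrank ℝ F : ℝ) - 2) / 2 with hcst
  set GRAD : F := fderiv ℝ φ x ((lam x)⁻¹ • gradlam x) with hGRAD
  set TH : F := ∑ aa, sff ΓM ΓN φ x (w aa) (w aa) with hTHd
  have hlamne : lam x ≠ 0 := ne_of_gt (hlampos x)
  have hkey : ∀ z, z ∈ Hor gM φ x →
      gN (φ x) (TH + cst • GRAD) (fderiv ℝ φ x z) = 0 := by
    intro z hz
    have hα : ∀ aa, gN (φ x) (sff ΓM ΓN φ x (w aa) (w aa)) (fderiv ℝ φ x z)
        = fderiv ℝ lam x (w aa) * gM x (w aa) z - fderiv ℝ lam x z / 2 := by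
      intro aa
      have h1 := E1 (w aa) (hwHor aa) z hz (w aa)
      have h2 := E1 (w aa) (hwHor aa) (w aa) (hwHor aa) z
      have h3 : gM x (w aa) (w aa) = 1 := by
        have := hfON (Sum.inr aa) (Sum.inr aa)
        simpa [hfdef] using this
      rw [h3, mul_one] at h2
      have h4 : gN (φ x) (sff ΓM ΓN φ x z (w aa)) (fderiv ℝ φ x (w aa))
          = gN (φ x) (fderiv ℝ φ x (w aa)) (sff ΓM ΓN φ x z (w aa)) :=
        hNsym _ _ _
      have h5 : gN (φ x) (fderiv ℝ φ x (w aa)) (sff ΓM ΓN φ x (w aa) z)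
          = fderiv ℝ lam x z / 2 := by
        rw [hsffsym (w aa) z]
        linarith [h2, h4]
      linarith [h1, h5]
    have hsum1 : gN (φ x) TH (fderiv ℝ φ x z)
        = ∑ aa, gN (φ x) (sff ΓM ΓN φ x (w aa) (w aa)) (fderiv ℝ φ x z) := by
      rw [hTHd]
      exact map_sum (IsLinearMap.mk' _ (hNlin (φ x) (fderiv ℝ φ x z))) _ _
    have hsum2 : ∑ aa, gN (φ x) (sff ΓM ΓN φ x (w aa) (w aa)) (fderiv ℝ φ x z)
        = (∑ aa, fderiv ℝ lam x (w aa) * gM x (w aa) z)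
          - (Module.finrank ℝ F : ℝ) * (fderiv ℝ lam x z / 2) := by
      rw [Finset.sum_congr rfl fun aa _ => hα aa, Finset.sum_sub_distrib]
      congr 1
      rw [Finset.sum_const, Finset.card_univ, Fintype.card_fin, hnn,
        nsmul_eq_mul]
    have hgexp : ∑ aa, fderiv ℝ lam x (w aa) * gM x (w aa) z
        = fderiv ℝ lam x z := by
      have hexp := ON_expansion (gM x) (hgsym x) (hgpos x)
        (fun t => hglin x t) f hfON hfspan (gradlam x)
      have h1 : gM x (gradlam x) z
          = ∑ p, gM x (gradlam x) (f p) * gM x (f p) z := by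
        conv_lhs => rw [hexp]
        exact lin_comb (hglin x z) _ _ _
      rw [Fintype.sum_sum_type] at h1
      have h2 : ∀ j, gM x (gradlam x) (f (Sum.inl j)) * gM x (f (Sum.inl j)) z
          = 0 := by
        intro j
        have h3 : gM x (f (Sum.inl j)) z = 0 := by
          show gM x (v j x) z = 0
          rw [hgsym]
          exact hz _ (hvvert j x)
        rw [h3, mul_zero]
      rw [Finset.sum_congr rfl (fun j _ => h2 j), Finset.sum_const_zero,
        zero_add] at h1
      have h5 : fderiv ℝ lam x z = gM x (gradlam x) z := (hgrad x z).symm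
      rw [h5, h1]
      refine Finset.sum_congr rfl fun aa _ => ?_
      rw [(hgrad x (w aa)).symm]
      rfl
    have hGRADz : gN (φ x) GRAD (fderiv ℝ φ x z) = fderiv ℝ lam x z := by
      rw [hGRAD, hpair ((lam x)⁻¹ • gradlam x) z hz, (hglin x z).map_smul,
        smul_eq_mul, hgrad x z, ← mul_assoc, mul_inv_cancel₀ hlamne, one_mul]
    have haddz : gN (φ x) (TH + cst • GRAD) (fderiv ℝ φ x z)
        = gN (φ x) TH (fderiv ℝ φ x z)
          + cst * gN (φ x) GRAD (fderiv ℝ φ x z) := by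
      rw [(hNlin (φ x) (fderiv ℝ φ x z)).map_add]
      congr 1
      have := (hNlin (φ x) (fderiv ℝ φ x z)).map_smul cst GRAD
      rw [this, smul_eq_mul]
    rw [haddz, hsum1, hsum2, hgexp, hGRADz, hcst]
    ring
  have hTH0 : TH + cst • GRAD = 0 := by
    apply hinj
    intro Z
    rw [← hPhdφ Z]
    exact hkey (Ph x Z) (hPh x Z).1
  have hTHval : TH = -(cst • GRAD) := add_eq_zero_iff_eq_neg.mp hTH0
  have hmn0 : ((Module.finrank ℝ E : ℝ) - (Module.finrank ℝ F : ℝ)) ≠ 0 := by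
    have h : (Module.finrank ℝ F : ℝ) < (Module.finrank ℝ E : ℝ) := by
      exact_mod_cast hdim
    exact sub_ne_zero.mpr (ne_of_gt h)
  have hRHS2 : ((Module.finrank ℝ E : ℝ) - (Module.finrank ℝ F : ℝ)) •
      fderiv ℝ φ x (((Module.finrank ℝ E : ℝ) - (Module.finrank ℝ F : ℝ))⁻¹ •
        ∑ j, Ph x (fderiv ℝ (v j) x (v j x) + ΓM x (v j x) (v j x)))
      = ∑ j, fderiv ℝ φ x
          (fderiv ℝ (v j) x (v j x) + ΓM x (v j x) (v j x)) := by
    rw [map_smul, smul_smul, mul_inv_cancel₀ hmn0, one_smul, map_sum]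
    exact Finset.sum_congr rfl fun j _ => hPhdφ _
  rw [htrace, hTHval, hRHS2, Finset.sum_congr rfl fun j _ => hvert j, neg_smul]
  rw [Finset.sum_neg_distrib]
  abel

end
end
end
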